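/- arXiv:1507.06808 — 5 statements merged into one kernel-verified Lean document; each statement's English description precedes it below -/
import Mathlib

section
/- Let N = ⊕_{l=1}^k M_{n_l}(ℂ), let α : N → B(H) and β : N^op → B(K) be unital *-homomorphisms, let e^{(l)} denote the minimal central projections of N, and set q = Σ_l (1/n_l) Σ_{i,j} β(e^{(l)}_{ji}) ⊗ α(e^{(l)}_{ij}). Then the compressed set q (β(N^op) ⊗ α(N)) q equals the linear span of the elements (β(e^{(l)}) ⊗ α(e^{(l)})) q, l = 1,…,k. In particular, every element of q (β(N^op) ⊗ α(N)) q is of the form Σ_l λ_l (β(e^{(l)}) ⊗ α(e^{(l)})) q with scalars λ_l ∈ ℂ. -/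
open Matrix MulOpposite

section
variable {k : ℕ} {n : Fin k → ℕ} {A : Type*} [Ring A] [StarRing A] [Algebra ℂ A]
variable (α : (∀ l, Matrix (Fin (n l)) (Fin (n l)) ℂ) →⋆ₐ[ℂ] A)
variable (β : (∀ l, Matrix (Fin (n l)) (Fin (n l)) ℂ)ᵐᵒᵖ →⋆ₐ[ℂ] A)

lemma aux_mul_single (x : ∀ l, Matrix (Fin (n l)) (Fin (n l)) ℂ)
    (p : Fin k) (M : Matrix (Fin (n p)) (Fin (n p)) ℂ) :
    x * Pi.single p M = Pi.single p (x p * M) := by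
  funext m
  by_cases h : m = p
  · subst h; simp
  · simp [Pi.single_eq_of_ne h]

lemma aux_single_mul (y : ∀ l, Matrix (Fin (n l)) (Fin (n l)) ℂ)
    (p : Fin k) (M : Matrix (Fin (n p)) (Fin (n p)) ℂ) :
    Pi.single p M * y = Pi.single p (M * y p) := by
  funext m
  by_cases h : m = p
  · subst h; simp
  · simp [Pi.single_eq_of_ne h]

lemma aux_sandwich {m : ℕ} (M : Matrix (Fin m) (Fin m) ℂ) (a b c d : Fin m) :
    Matrix.single a b 1 * M * Matrix.single c d 1 = M b c • Matrix.single a d 1 := by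
  ext r s
  simp [Matrix.mul_apply, Matrix.single, ite_and, Finset.sum_ite_eq, Finset.sum_ite_eq']
  split_ifs <;> simp

lemma aux_mixed_mul (hcomm : ∀ x y, Commute (β x) (α y))
    (u u' : (∀ l, Matrix (Fin (n l)) (Fin (n l)) ℂ)ᵐᵒᵖ)
    (v v' : ∀ l, Matrix (Fin (n l)) (Fin (n l)) ℂ) :
    (β u * α v) * (β u' * α v') = β (u * u') * α (v * v') := by
  rw [map_mul β, map_mul α, mul_assoc, ← mul_assoc (α v), ← (hcomm u' v).eq, mul_assoc, ← mul_assoc]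

lemma aux_term (hcomm : ∀ x y, Commute (β x) (α y))
    (x y : ∀ l, Matrix (Fin (n l)) (Fin (n l)) ℂ) (p r : Fin k)
    (i j : Fin (n p)) (i' j' : Fin (n r)) :
    (β (op (Pi.single p (Matrix.single j i (1:ℂ)))) * α (Pi.single p (Matrix.single i j 1))) *
      (β (op x) * α y) *
      (β (op (Pi.single r (Matrix.single j' i' (1:ℂ)))) * α (Pi.single r (Matrix.single i' j' 1)))
    = β (op (Pi.single r (Matrix.single j' i' (1:ℂ)) * (x * Pi.single p (Matrix.single j i 1)))) *
        α (Pi.single p (Matrix.single i j (1:ℂ)) * y * Pi.single r (Matrix.single i' j' 1)) := by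
  rw [aux_mixed_mul α β hcomm, aux_mixed_mul α β hcomm, ← op_mul, ← op_mul, mul_assoc]

lemma aux_term_ne (hcomm : ∀ x y, Commute (β x) (α y))
    (x y : ∀ l, Matrix (Fin (n l)) (Fin (n l)) ℂ) (p r : Fin k) (hne : r ≠ p)
    (i j : Fin (n p)) (i' j' : Fin (n r)) :
    (β (op (Pi.single p (Matrix.single j i (1:ℂ)))) * α (Pi.single p (Matrix.single i j 1))) *
      (β (op x) * α y) *
      (β (op (Pi.single r (Matrix.single j' i' (1:ℂ)))) * α (Pi.single r (Matrix.single i' j' 1)))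
    = 0 := by
  rw [aux_term α β hcomm, aux_mul_single]
  have : (Pi.single r (Matrix.single j' i' (1:ℂ)) :
        ∀ l, Matrix (Fin (n l)) (Fin (n l)) ℂ) * Pi.single p (x p * Matrix.single j i 1)
      = 0 := by
    rw [aux_mul_single]
    simp [Pi.single_eq_of_ne (Ne.symm hne)]
  rw [this]
  simp

lemma aux_term_eq (hcomm : ∀ x y, Commute (β x) (α y))
    (x y : ∀ l, Matrix (Fin (n l)) (Fin (n l)) ℂ) (p : Fin k)
    (i j i' j' : Fin (n p)) :
    (β (op (Pi.single p (Matrix.single j i (1:ℂ)))) * α (Pi.single p (Matrix.single i j 1))) *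
      (β (op x) * α y) *
      (β (op (Pi.single p (Matrix.single j' i' (1:ℂ)))) * α (Pi.single p (Matrix.single i' j' 1)))
    = (x p i' j * y p j i') •
        (β (op (Pi.single p (Matrix.single j' i (1:ℂ)))) * α (Pi.single p (Matrix.single i j' 1))) := by
  rw [aux_term α β hcomm]
  have hb : Pi.single p (Matrix.single j' i' (1:ℂ)) * (x * Pi.single p (Matrix.single j i 1))
      = x p i' j • (Pi.single p (Matrix.single j' i (1:ℂ)) :
          ∀ l, Matrix (Fin (n l)) (Fin (n l)) ℂ) := by
    rw [aux_mul_single, aux_mul_single]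
    simp only [Pi.single_eq_same]
    rw [← mul_assoc, aux_sandwich, Pi.single_smul]
  have ha : Pi.single p (Matrix.single i j (1:ℂ)) * y * Pi.single p (Matrix.single i' j' 1)
      = y p j i' • (Pi.single p (Matrix.single i j' (1:ℂ)) :
          ∀ l, Matrix (Fin (n l)) (Fin (n l)) ℂ) := by
    rw [aux_single_mul, aux_mul_single]
    simp only [Pi.single_eq_same]
    rw [aux_sandwich, Pi.single_smul]
  rw [hb, ha, op_smul, _root_.map_smul, _root_.map_smul, smul_mul_smul_comm]

end

section more
variable {k : ℕ} {n : Fin k → ℕ} {A : Type*} [Ring A] [StarRing A] [Algebra ℂ A]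
variable (α : (∀ l, Matrix (Fin (n l)) (Fin (n l)) ℂ) →⋆ₐ[ℂ] A)
variable (β : (∀ l, Matrix (Fin (n l)) (Fin (n l)) ℂ)ᵐᵒᵖ →⋆ₐ[ℂ] A)

def auxQ (p : Fin k) : A :=
  ∑ i : Fin (n p), ∑ j : Fin (n p),
    β (op (Pi.single p (Matrix.single j i (1:ℂ)))) * α (Pi.single p (Matrix.single i j 1))

lemma aux_rearrange {M : Type*} [AddCommMonoid M] [Module ℂ M] {m : ℕ}
    (c : Fin m → Fin m → ℂ) (D : Fin m → Fin m → M) :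
    ∑ i', ∑ j', ∑ i, ∑ j, c i' j • D i j'
      = (∑ i', ∑ j, c i' j) • (∑ i, ∑ j', D i j') := by
  have hr : ((∑ i', ∑ j, c i' j) • (∑ i, ∑ j', D i j') : M)
      = ∑ i', ∑ j, ∑ i, ∑ j', c i' j • D i j' := by
    rw [Finset.sum_smul]
    refine Finset.sum_congr rfl fun i' _ => ?_
    rw [Finset.sum_smul]
    refine Finset.sum_congr rfl fun j _ => ?_
    rw [Finset.smul_sum]
    refine Finset.sum_congr rfl fun i _ => ?_
    rw [Finset.smul_sum]
  rw [hr]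
  refine Finset.sum_congr rfl fun i' _ => ?_
  calc ∑ j', ∑ i, ∑ j, c i' j • D i j'
      = ∑ j', ∑ j, ∑ i, c i' j • D i j' :=
        Finset.sum_congr rfl fun _ _ => Finset.sum_comm
    _ = ∑ j, ∑ j', ∑ i, c i' j • D i j' := Finset.sum_comm
    _ = ∑ j, ∑ i, ∑ j', c i' j • D i j' :=
        Finset.sum_congr rfl fun _ _ => Finset.sum_comm

lemma auxQ_mul_ne (hcomm : ∀ x y, Commute (β x) (α y))
    (x y : ∀ l, Matrix (Fin (n l)) (Fin (n l)) ℂ) (p r : Fin k) (hne : r ≠ p) :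
    auxQ α β p * (β (op x) * α y) * auxQ α β r = 0 := by
  simp only [auxQ, Finset.sum_mul, Finset.mul_sum]
  refine Finset.sum_eq_zero fun i' _ => Finset.sum_eq_zero fun j' _ =>
    Finset.sum_eq_zero fun i _ => Finset.sum_eq_zero fun j _ => ?_
  exact aux_term_ne α β hcomm x y p r hne i j i' j'

lemma auxQ_mul_eq (hcomm : ∀ x y, Commute (β x) (α y))
    (x y : ∀ l, Matrix (Fin (n l)) (Fin (n l)) ℂ) (p : Fin k) :
    auxQ α β p * (β (op x) * α y) * auxQ α β p = (x p * y p).trace • auxQ α β p := by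
  have ht : (x p * y p).trace = ∑ i', ∑ j, x p i' j * y p j i' := by
    simp [Matrix.trace, Matrix.mul_apply, Matrix.diag]
  simp only [auxQ, Finset.sum_mul, Finset.mul_sum, ht]
  calc (∑ i' : Fin (n p), ∑ j' : Fin (n p), ∑ i : Fin (n p), ∑ j : Fin (n p),
        (β (op (Pi.single p (Matrix.single j i (1:ℂ)))) * α (Pi.single p (Matrix.single i j 1))) *
          (β (op x) * α y) *
          (β (op (Pi.single p (Matrix.single j' i' (1:ℂ)))) * α (Pi.single p (Matrix.single i' j' 1))))
      = ∑ i', ∑ j', ∑ i, ∑ j, (x p i' j * y p j i') •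
          (β (op (Pi.single p (Matrix.single j' i (1:ℂ)))) * α (Pi.single p (Matrix.single i j' 1))) := by
        refine Finset.sum_congr rfl fun i' _ => Finset.sum_congr rfl fun j' _ =>
          Finset.sum_congr rfl fun i _ => Finset.sum_congr rfl fun j _ => ?_
        exact aux_term_eq α β hcomm x y p i j i' j'
    _ = (∑ i', ∑ j, x p i' j * y p j i') • (∑ i, ∑ j',
          β (op (Pi.single p (Matrix.single j' i (1:ℂ)))) * α (Pi.single p (Matrix.single i j' 1))) :=
        aux_rearrange _ _

lemma auxE_mul_Q_eq (hcomm : ∀ x y, Commute (β x) (α y)) (p : Fin k) :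
    (β (op (Pi.single p (1 : Matrix (Fin (n p)) (Fin (n p)) ℂ))) * α (Pi.single p 1)) *
      auxQ α β p = auxQ α β p := by
  simp only [auxQ, Finset.mul_sum]
  refine Finset.sum_congr rfl fun i _ => Finset.sum_congr rfl fun j _ => ?_
  rw [aux_mixed_mul α β hcomm, ← op_mul, aux_mul_single, aux_mul_single]
  simp

lemma auxE_mul_Q_ne (hcomm : ∀ x y, Commute (β x) (α y)) (p r : Fin k) (hne : p ≠ r) :
    (β (op (Pi.single p (1 : Matrix (Fin (n p)) (Fin (n p)) ℂ))) * α (Pi.single p 1)) *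
      auxQ α β r = 0 := by
  simp only [auxQ, Finset.mul_sum]
  refine Finset.sum_eq_zero fun i _ => Finset.sum_eq_zero fun j _ => ?_
  rw [aux_mixed_mul α β hcomm, ← op_mul, aux_mul_single, aux_mul_single]
  simp [Pi.single_eq_of_ne hne, Pi.single_eq_of_ne (Ne.symm hne)]

end more

section key
variable {k : ℕ} {n : Fin k → ℕ} {A : Type*} [Ring A] [StarRing A] [Algebra ℂ A]
variable (α : (∀ l, Matrix (Fin (n l)) (Fin (n l)) ℂ) →⋆ₐ[ℂ] A)
variable (β : (∀ l, Matrix (Fin (n l)) (Fin (n l)) ℂ)ᵐᵒᵖ →⋆ₐ[ℂ] A)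

lemma aux_E_mul_q (hcomm : ∀ x y, Commute (β x) (α y)) (q : A)
    (hq : q = ∑ l, ((n l : ℂ))⁻¹ • auxQ α β l) (p : Fin k) :
    β (op (Pi.single p (1 : Matrix (Fin (n p)) (Fin (n p)) ℂ))) * α (Pi.single p 1) * q
      = ((n p : ℂ))⁻¹ • auxQ α β p := by
  rw [hq, Finset.mul_sum]
  rw [Finset.sum_eq_single p]
  · rw [mul_smul_comm, auxE_mul_Q_eq α β hcomm]
  · intro r _ hrp
    rw [mul_smul_comm, auxE_mul_Q_ne α β hcomm p r (Ne.symm hrp), smul_zero]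
  · simp

lemma aux_key (hcomm : ∀ x y, Commute (β x) (α y)) (q : A)
    (hq : q = ∑ l, ((n l : ℂ))⁻¹ • auxQ α β l)
    (x y : ∀ l, Matrix (Fin (n l)) (Fin (n l)) ℂ) :
    q * (β (op x) * α y) * q
      = ∑ p, (((n p : ℂ))⁻¹ * (x p * y p).trace) •
          (β (op (Pi.single p (1 : Matrix (Fin (n p)) (Fin (n p)) ℂ))) * α (Pi.single p 1) * q) := by
  conv_lhs => rw [hq]
  simp only [Finset.sum_mul, Finset.mul_sum, smul_mul_assoc, mul_smul_comm, Finset.smul_sum]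
  calc (∑ r, ∑ p, ((n r : ℂ))⁻¹ • (((n p : ℂ))⁻¹ •
          (auxQ α β p * (β (op x) * α y) * auxQ α β r)))
      = ∑ r, ((n r : ℂ))⁻¹ • (((n r : ℂ))⁻¹ • ((x r * y r).trace • auxQ α β r)) := by
        refine Finset.sum_congr rfl fun r _ => ?_
        rw [Finset.sum_eq_single r]
        · rw [auxQ_mul_eq α β hcomm]
        · intro p _ hpr
          simp [auxQ_mul_ne α β hcomm x y p r (Ne.symm hpr)]
        · simp
    _ = ∑ p, (((n p : ℂ))⁻¹ * (x p * y p).trace) •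
          (β (op (Pi.single p (1 : Matrix (Fin (n p)) (Fin (n p)) ℂ))) * α (Pi.single p 1) * q) := by
        refine Finset.sum_congr rfl fun p _ => ?_
        rw [aux_E_mul_q α β hcomm q hq p, smul_smul, smul_smul, smul_smul]
        ring_nf

end key

/-- For `N = ⊕_l M_{n_l}(ℂ)` with minimal central projections `e^{(l)}`, the compressed set
`q (β(N^op) ⊗ α(N)) q` equals the linear span of the elements `(β(e^{(l)}) ⊗ α(e^{(l)})) q`;
in particular every element of it is of the form `Σ_l λ_l (β(e^{(l)}) ⊗ α(e^{(l)})) q`. -/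
theorem stmt5 (k : ℕ) (n : Fin k → ℕ) {A : Type*} [Ring A] [StarRing A] [Algebra ℂ A]
    (α : (∀ l, Matrix (Fin (n l)) (Fin (n l)) ℂ) →⋆ₐ[ℂ] A)
    (β : (∀ l, Matrix (Fin (n l)) (Fin (n l)) ℂ)ᵐᵒᵖ →⋆ₐ[ℂ] A)
    (hcomm : ∀ x y, Commute (β x) (α y)) (q : A)
    (hq : q = ∑ l, ((n l : ℂ))⁻¹ • ∑ i : Fin (n l), ∑ j : Fin (n l),
        β (op (Pi.single l (Matrix.single j i (1 : ℂ)))) *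
          α (Pi.single l (Matrix.single i j (1 : ℂ)))) :
    {z : A | ∃ x y : ∀ l, Matrix (Fin (n l)) (Fin (n l)) ℂ,
        z = q * (β (op x) * α y) * q}
      = (Submodule.span ℂ (Set.range fun l : Fin k =>
          β (op (Pi.single l (1 : Matrix (Fin (n l)) (Fin (n l)) ℂ))) *
            α (Pi.single l 1) * q) : Set A) ∧
    ∀ z ∈ {z : A | ∃ x y : ∀ l, Matrix (Fin (n l)) (Fin (n l)) ℂ,
        z = q * (β (op x) * α y) * q},
      ∃ lam : Fin k → ℂ, z = ∑ l, lam l •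
        (β (op (Pi.single l (1 : Matrix (Fin (n l)) (Fin (n l)) ℂ))) *
          α (Pi.single l 1) * q) := by
  have hq' : q = ∑ l, ((n l : ℂ))⁻¹ • auxQ α β l := hq
  have key := aux_key α β hcomm q hq'
  constructor
  · ext z
    simp only [Set.mem_setOf_eq, SetLike.mem_coe]
    constructor
    · rintro ⟨x, y, rfl⟩
      rw [key x y]
      exact Submodule.sum_mem _ fun p _ =>
        Submodule.smul_mem _ _ (Submodule.subset_span ⟨p, rfl⟩)
    · intro hz
      obtain ⟨c, hc⟩ := (Submodule.mem_span_range_iff_exists_fun ℂ).mp hz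
      refine ⟨fun l => c l • 1, 1, ?_⟩
      rw [key, ← hc]
      refine Finset.sum_congr rfl fun p _ => ?_
      by_cases h : (n p : ℂ) = 0
      · have h0 : n p = 0 := by exact_mod_cast h
        have h1 : (1 : Matrix (Fin (n p)) (Fin (n p)) ℂ) = 0 := by
          ext i j; exact absurd i.isLt (by omega)
        rw [h1]
        simp
      · congr 1
        simp only [Pi.one_apply, mul_one]
        rw [Matrix.trace_smul, Matrix.trace_one, smul_eq_mul, Fintype.card_fin]
        field_simp
  · rintro z ⟨x, y, rfl⟩
    exact ⟨fun p => ((n p : ℂ))⁻¹ * (x p * y p).trace, key x y⟩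
end

section
/- Let α : M_n(ℂ) → B(H) and β : M_n(ℂ)^op → B(K) be unital injective *-homomorphisms and set q = (1/n) Σ_{ij} β(E_{ji}) ⊗ α(E_{ij}). If T ∈ B(K ⊗ H) satisfies T = q (β(x) ⊗ α(y)) q for some x, y ∈ M_n(ℂ) (more generally T lies in the linear span of such elements) and T* T = q, then T = λ q for a unique scalar λ with |λ| = 1. -/
open Matrix MulOpposite

private lemma sbm_mul_left {n : ℕ} (x : Matrix (Fin n) (Fin n) ℂ) (i j k l : Fin n) :
    Matrix.single l k (1:ℂ) * x * Matrix.single j i 1 = x k j • Matrix.single l i 1 := by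
  ext a b
  simp [mul_apply, Matrix.single, ite_and, Matrix.smul_apply, Finset.sum_ite_eq, Finset.sum_ite_eq']
  by_cases ha : l = a <;> by_cases hb : i = b <;> simp [ha, hb]

private lemma sbm_mul_left' {n : ℕ} (x : Matrix (Fin n) (Fin n) ℂ) (i j k l : Fin n) :
    Matrix.single l k (1:ℂ) * (x * Matrix.single j i 1) = x k j • Matrix.single l i 1 := by
  rw [← mul_assoc, sbm_mul_left]

private lemma sbm_diag_sum {n : ℕ} :
    ∑ i : Fin n, Matrix.single i i (1:ℂ) = 1 := by
  ext a b
  by_cases h : a = b <;>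
    simp [Matrix.sum_apply, Matrix.single, one_apply, ite_and, Finset.sum_ite_eq, h]

private lemma sbm_star {n : ℕ} (i j : Fin n) :
    star (Matrix.single i j (1:ℂ)) = Matrix.single j i 1 := by
  ext a b
  simp [Matrix.star_apply, Matrix.single, and_comm]

/-- If `T` lies in the span of the compressions `q (β(x) ⊗ α(y)) q` and `T* T = q`, with
`α, β` injective, then `T = λ • q` for a unique scalar `λ` of modulus `1`. -/
theorem stmt6 (n : ℕ) (hn : 0 < n)
    {A : Type*} [Ring A] [StarRing A] [Algebra ℂ A] [StarModule ℂ A] [Nontrivial A]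
    (α : Matrix (Fin n) (Fin n) ℂ →⋆ₐ[ℂ] A) (hα : Function.Injective α)
    (β : (Matrix (Fin n) (Fin n) ℂ)ᵐᵒᵖ →⋆ₐ[ℂ] A) (hβ : Function.Injective β)
    (hcomm : ∀ x y, Commute (β x) (α y)) (q : A)
    (hq : q = (n : ℂ)⁻¹ • ∑ i : Fin n, ∑ j : Fin n,
        β (op (Matrix.single j i (1 : ℂ))) * α (Matrix.single i j (1 : ℂ)))
    (T : A)
    (hT : T ∈ Submodule.span ℂ {z : A | ∃ x y : Matrix (Fin n) (Fin n) ℂ,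
        z = q * (β (op x) * α y) * q})
    (hTT : star T * T = q) :
    ∃! lam : ℂ, ‖lam‖ = 1 ∧ T = lam • q := by
  set M := Matrix (Fin n) (Fin n) ℂ with hM
  set S : A := ∑ i : Fin n, ∑ j : Fin n,
      β (op (Matrix.single j i (1:ℂ))) * α (Matrix.single i j (1:ℂ)) with hS
  have hnC : (n : ℂ) ≠ 0 := Nat.cast_ne_zero.2 hn.ne'
  have key : ∀ (u v w : Mᵐᵒᵖ) (p r s : M),
      (β u * α p) * (β v * α r) * (β w * α s) = β (u * v * w) * α (p * r * s) := by
    intro u v w p r s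
    rw [(hcomm v p).symm.mul_mul_mul_comm,
      (((hcomm w p).symm.mul_left (hcomm w r).symm)).mul_mul_mul_comm,
      ← _root_.map_mul, ← _root_.map_mul, ← _root_.map_mul, ← _root_.map_mul]
  have hcomp : ∀ x y : M, S * (β (op x) * α y) * S =
      (∑ j : Fin n, ∑ k : Fin n, x k j * y j k) • S := by
    intro x y
    calc S * (β (op x) * α y) * S
        = ∑ k : Fin n, ∑ l : Fin n, ∑ i : Fin n, ∑ j : Fin n,
            (β (op (Matrix.single j i (1:ℂ))) * α (Matrix.single i j 1)) * (β (op x) * α y) *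
              (β (op (Matrix.single l k 1)) * α (Matrix.single k l 1)) := by
          rw [hS]; simp only [Finset.sum_mul, Finset.mul_sum]
      _ = ∑ k : Fin n, ∑ l : Fin n, ∑ i : Fin n, ∑ j : Fin n,
            (x k j * y j k) • (β (op (Matrix.single l i (1:ℂ))) * α (Matrix.single i l 1)) := by
          refine Finset.sum_congr rfl fun k _ => Finset.sum_congr rfl fun l _ =>
            Finset.sum_congr rfl fun i _ => Finset.sum_congr rfl fun j _ => ?_
          rw [key, ← op_mul, ← op_mul, sbm_mul_left', sbm_mul_left,
            op_smul, _root_.map_smul, _root_.map_smul, smul_mul_assoc, mul_smul_comm, smul_smul]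
      _ = (∑ j : Fin n, ∑ k : Fin n, x k j * y j k) • S := by
          simp only [← Finset.sum_smul, ← Finset.smul_sum]
          rw [hS]
          congr 1
          · exact Finset.sum_comm
          · exact Finset.sum_comm
  -- basic consequences
  have hqcomp : ∀ x y : Matrix (Fin n) (Fin n) ℂ, q * (β (op x) * α y) * q =
      ((n:ℂ)⁻¹ * (∑ j : Fin n, ∑ k : Fin n, x k j * y j k)) • q := by
    intro x y
    conv_lhs => rw [hq, smul_mul_assoc, smul_mul_assoc, mul_smul_comm, hcomp, smul_smul]
    rw [hq, smul_smul, smul_smul]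
    congr 1
    ring
  have hone : β (op (1 : Matrix (Fin n) (Fin n) ℂ)) * α (1 : Matrix (Fin n) (Fin n) ℂ) = 1 := by
    simp
  have hqq : q * q = q := by
    have h2 := hqcomp 1 1
    rw [hone, mul_one] at h2
    rw [h2]
    have hC : (∑ j : Fin n, ∑ k : Fin n,
        (1 : Matrix (Fin n) (Fin n) ℂ) k j * (1 : Matrix (Fin n) (Fin n) ℂ) j k) = (n : ℂ) := by
      simp [one_apply, Finset.sum_ite_eq]
    rw [hC, inv_mul_cancel₀ hnC, one_smul]
  have hSq : S = (n : ℂ) • q := by rw [hq, smul_smul, mul_inv_cancel₀ hnC, one_smul]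
  -- star q = q
  have hstarS : star S = S := by
    rw [hS, star_sum]
    calc ∑ i : Fin n, star (∑ j : Fin n,
          β (op (Matrix.single j i (1:ℂ))) * α (Matrix.single i j 1))
        = ∑ i : Fin n, ∑ j : Fin n,
            β (op (Matrix.single i j (1:ℂ))) * α (Matrix.single j i 1) := by
          refine Finset.sum_congr rfl fun i _ => ?_
          rw [star_sum]
          refine Finset.sum_congr rfl fun j _ => ?_
          rw [StarMul.star_mul, ← map_star, ← map_star, ← op_star, sbm_star, sbm_star,
            ((hcomm _ _).symm.eq)]
      _ = ∑ i : Fin n, ∑ j : Fin n,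
            β (op (Matrix.single j i (1:ℂ))) * α (Matrix.single i j 1) := Finset.sum_comm
  have hstarq : star q = q := by
    rw [hq, star_smul, hstarS]
    congr 1
    simp [Complex.star_def, map_inv₀]
  -- key2 rearrangement
  have key2 : ∀ (u v : Mᵐᵒᵖ) (p r : M), α p * (β u * α r) * β v = β (u * v) * α (p * r) := by
    intro u v p r
    rw [← mul_assoc, (hcomm u p).symm.eq, mul_assoc (β u), mul_assoc,
      ((hcomm v p).symm.mul_left (hcomm v r).symm).eq, ← mul_assoc, ← _root_.map_mul,
      ← _root_.map_mul]
  -- collapsing identity, used to show q ≠ 0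
  have hid : ∀ k l : Fin n, α (Matrix.single k l (1:ℂ)) =
      ∑ i : Fin n, α (Matrix.single k i 1) * S * β (op (Matrix.single i l 1)) := by
    intro k l
    have h1 : ∀ i j : Fin n, α (Matrix.single k i (1:ℂ)) * S * β (op (Matrix.single j l 1)) =
        β (op (Matrix.single j i 1)) * α (Matrix.single k l 1) := by
      intro i j
      rw [hS]
      simp only [Finset.mul_sum, Finset.sum_mul]
      calc ∑ i' : Fin n, ∑ j' : Fin n, α (Matrix.single k i (1:ℂ)) *
            (β (op (Matrix.single j' i' 1)) * α (Matrix.single i' j' 1)) *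
            β (op (Matrix.single j l 1))
          = ∑ i' : Fin n, ∑ j' : Fin n, (if j' = l ∧ i' = i then
              β (op (Matrix.single j i (1:ℂ))) * α (Matrix.single k l 1) else 0) := by
            refine Finset.sum_congr rfl fun i' _ => Finset.sum_congr rfl fun j' _ => ?_
            rw [key2, ← op_mul]
            by_cases h1 : j' = l
            · subst h1
              by_cases h2 : i' = i
              · subst h2
                rw [if_pos ⟨rfl, rfl⟩, single_mul_single_same, single_mul_single_same]
                norm_num
              · rw [single_mul_single_of_ne 1 k i _ (fun h => h2 h.symm) 1,
                  if_neg (fun h => h2 h.2), map_zero, mul_zero]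
            · rw [single_mul_single_of_ne 1 j l _ (fun h => h1 h.symm) 1,
                  if_neg (fun h => h1 h.1), op_zero, map_zero, zero_mul]
          _ = β (op (Matrix.single j i (1:ℂ))) * α (Matrix.single k l 1) := by
            simp [ite_and, Finset.sum_ite_eq, Finset.sum_ite_eq']
    rw [Finset.sum_congr rfl fun i _ => h1 i i, ← Finset.sum_mul,
      show (∑ i : Fin n, β (op (Matrix.single i i (1:ℂ)))) = 1 by
        rw [← _root_.map_sum, ← Finset.op_sum, sbm_diag_sum, MulOpposite.op_one, _root_.map_one], one_mul]
  have hSne : S ≠ 0 := by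
    intro h0
    have hz : ∀ k l : Fin n, α (Matrix.single k l (1:ℂ)) = 0 := by
      intro k l
      rw [hid k l, h0]
      simp
    have h1 := hα (show α (Matrix.single (⟨0,hn⟩ : Fin n) ⟨0,hn⟩ (1:ℂ)) = α 0 by
      rw [hz, map_zero])
    have h2 := congrFun (congrFun h1 ⟨0,hn⟩) ⟨0,hn⟩
    simp [Matrix.single] at h2
  have hq0 : q ≠ 0 := by
    intro h0
    exact hSne (by rw [hSq, h0, smul_zero])
  have hcancel : ∀ c : ℂ, c • q = 0 → c = 0 := by
    intro c hc0
    by_contra hne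
    exact hq0 (by rw [← inv_smul_smul₀ hne q, hc0, smul_zero])
  have hsub : {z : A | ∃ x y : Matrix (Fin n) (Fin n) ℂ, z = q * (β (op x) * α y) * q} ⊆
      (Submodule.span ℂ ({q} : Set A) : Set A) := by
    rintro z ⟨x, y, rfl⟩
    rw [SetLike.mem_coe, Submodule.mem_span_singleton]
    exact ⟨_, (hqcomp x y).symm⟩
  obtain ⟨lam, hlam⟩ := Submodule.mem_span_singleton.1 (Submodule.span_le.mpr hsub hT)
  have hmain : (star lam * lam) • q = q := by
    have h1 : star (lam • q) * (lam • q) = (star lam * lam) • q := by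
      rw [star_smul, hstarq, smul_mul_assoc, mul_smul_comm, smul_smul, hqq]
    rw [← h1, hlam, hTT]
  have hc1 : star lam * lam = 1 := by
    have h2 : (star lam * lam - 1) • q = 0 := by rw [sub_smul, hmain, one_smul, sub_self]
    exact sub_eq_zero.1 (hcancel _ h2)
  have habs : ‖lam‖ = 1 := by
    have h3 : (Complex.normSq lam : ℂ) = 1 := by
      rw [Complex.normSq_eq_conj_mul_self, ← Complex.star_def, hc1]
    have h4 : Complex.normSq lam = 1 := by exact_mod_cast h3
    rw [Complex.norm_def, h4, Real.sqrt_one]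
  refine ⟨lam, ⟨habs, hlam.symm⟩, ?_⟩
  rintro y ⟨-, hy2⟩
  have h5 : (y - lam) • q = 0 := by rw [sub_smul, hlam, ← hy2, sub_self]
  exact sub_eq_zero.1 (hcancel _ h5)
end

section
/- Let α : M_n(ℂ) → B(H) and β : M_n(ℂ)^op → B(K) be unital *-homomorphisms, let q = (1/n) Σ_{ij} α(E_{ij}) ⊗ β(E_{ji}) ∈ B(H ⊗ K), and for ξ ∈ H let R_ξ : H_ε → H be defined by R_ξ(x) = α(x)ξ, where H_ε is M_n(ℂ) with inner product n Tr(x*y). Then for all ξ, η ∈ H: q (R_ξ R_η* ⊗ 1_K) = (R_ξ R_η* ⊗ 1_K) q = q (θ_{ξ,η} ⊗ 1_K) q, where θ_{ξ,η} ∈ B(H) is the rank-one operator ζ ↦ ⟨η, ζ⟩ ξ. -/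
open Matrix MulOpposite

section AuxAlg

variable {A : Type*} [Ring A] {n : ℕ}

private lemma aux_L1 (a b : Fin n → Fin n → A)
    (ha : ∀ i j k l, a i j * a k l = if j = k then a i l else 0)
    (hab : ∀ i j k l, Commute (a i j) (b k l)) (i j : Fin n) :
    (∑ p, ∑ q, a p q * b q p) * a i j = ∑ p, a p j * b i p := by
  rw [Finset.sum_mul]
  refine Finset.sum_congr rfl fun p _ => ?_
  rw [Finset.sum_mul]
  have : ∀ q : Fin n, a p q * b q p * a i j = if q = i then a p j * b q p else 0 := by
    intro q
    rw [mul_assoc, ← (hab i j q p).eq, ← mul_assoc, ha]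
    split_ifs <;> simp
  simp only [this, Finset.sum_ite_eq', Finset.mem_univ, if_true]

private lemma aux_L2 (a b : Fin n → Fin n → A)
    (ha : ∀ i j k l, a i j * a k l = if j = k then a i l else 0)
    (i j : Fin n) :
    a i j * (∑ p, ∑ q, a p q * b q p) = ∑ q, a i q * b q j := by
  rw [Finset.mul_sum]
  have : ∀ p, a i j * ∑ q, a p q * b q p = ∑ q, if j = p then a i q * b q p else 0 := by
    intro p
    rw [Finset.mul_sum]
    refine Finset.sum_congr rfl fun q _ => ?_
    rw [← mul_assoc, ha]
    split_ifs <;> simp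
  simp only [this]
  rw [Finset.sum_comm]
  refine Finset.sum_congr rfl fun q _ => ?_
  simp [Finset.sum_ite_eq, Finset.mem_univ]

private lemma aux_L3 (a b : Fin n → Fin n → A)
    (hb : ∀ i j k l, b i j * b k l = if i = l then b k j else 0)
    (hab : ∀ i j k l, Commute (a i j) (b k l)) (i j : Fin n) :
    b i j * (∑ p, ∑ q, a p q * b q p) = ∑ q, a i q * b q j := by
  rw [Finset.mul_sum]
  have : ∀ p, b i j * ∑ q, a p q * b q p = ∑ q, if i = p then a p q * b q j else 0 := by
    intro p
    rw [Finset.mul_sum]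
    refine Finset.sum_congr rfl fun q _ => ?_
    rw [← mul_assoc, ← (hab p q i j).eq, mul_assoc, hb]
    split_ifs <;> simp
  simp only [this]
  rw [Finset.sum_comm]
  refine Finset.sum_congr rfl fun q _ => ?_
  simp [Finset.sum_ite_eq, Finset.mem_univ]

private lemma aux_alg (a b : Fin n → Fin n → A) (t : A)
    (ha : ∀ i j k l, a i j * a k l = if j = k then a i l else 0)
    (hb : ∀ i j k l, b i j * b k l = if i = l then b k j else 0)
    (hab : ∀ i j k l, Commute (a i j) (b k l))
    (htb : ∀ k l, Commute t (b k l)) :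
    ((∑ i, ∑ j, a i j * b j i) * (∑ i, ∑ j, a i j * t * a j i)
        = (∑ i, ∑ j, a i j * t * a j i) * (∑ i, ∑ j, a i j * b j i)) ∧
      ((∑ i, ∑ j, a i j * b j i) * (∑ i, ∑ j, a i j * t * a j i)
        = (∑ i, ∑ j, a i j * b j i) * t * (∑ i, ∑ j, a i j * b j i)) := by
  set q0 : A := ∑ i, ∑ j, a i j * b j i with hq0
  set S0 : A := ∑ i, ∑ j, a i j * t * a j i with hS0
  have key1 : q0 * S0 = ∑ i, ∑ j, ∑ p, a p j * t * a j i * b i p := by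
    rw [hS0]
    simp only [Finset.mul_sum]
    refine Finset.sum_congr rfl fun i _ => ?_
    refine Finset.sum_congr rfl fun j _ => ?_
    rw [← mul_assoc, ← mul_assoc, aux_L1 a b ha hab i j, Finset.sum_mul, Finset.sum_mul]
    refine Finset.sum_congr rfl fun p _ => ?_
    rw [mul_assoc (a p j) (b i p) t, (htb i p).symm.eq, ← mul_assoc,
      mul_assoc (a p j * t), ← (hab j i i p).eq, ← mul_assoc]
  have key2 : S0 * q0 = ∑ i, ∑ j, ∑ p, a i j * t * a j p * b p i := by
    rw [hS0, Finset.sum_mul]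
    refine Finset.sum_congr rfl fun i _ => ?_
    rw [Finset.sum_mul]
    refine Finset.sum_congr rfl fun j _ => ?_
    rw [mul_assoc, aux_L2 a b ha j i, Finset.mul_sum]
    refine Finset.sum_congr rfl fun p _ => ?_
    simp only [← mul_assoc]

  have key3 : q0 * t * q0 = ∑ i, ∑ j, ∑ p, a i j * t * a j p * b p i := by
    conv_lhs => rw [hq0]
    simp only [Finset.sum_mul]
    refine Finset.sum_congr rfl fun i _ => ?_
    refine Finset.sum_congr rfl fun j _ => ?_
    rw [mul_assoc (a i j) (b j i) t, (htb j i).symm.eq, ← mul_assoc (a i j) t (b j i),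
      mul_assoc (a i j * t) (b j i) q0, aux_L3 a b hb hab j i, Finset.mul_sum]
    refine Finset.sum_congr rfl fun p _ => ?_
    rw [← mul_assoc]
  have swap : ∀ f : Fin n → Fin n → Fin n → A,
      (∑ i, ∑ j, ∑ p, f p j i) = ∑ i, ∑ j, ∑ p, f i j p := by
    intro f
    calc (∑ i, ∑ j, ∑ p, f p j i)
        = ∑ j, ∑ i, ∑ p, f p j i := Finset.sum_comm
      _ = ∑ j, ∑ p, ∑ i, f p j i := Finset.sum_congr rfl fun j _ => Finset.sum_comm
      _ = ∑ p, ∑ j, ∑ i, f p j i := Finset.sum_comm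
  constructor
  · rw [key1, key2]
    exact swap fun x y z => a x y * t * a y z * b z x
  · rw [key1, key3]
    exact swap fun x y z => a x y * t * a y z * b z x

end AuxAlg

private lemma stdBasisMatrix_conjT {n : ℕ} (i j : Fin n) :
    (single i j (1 : ℂ))ᴴ = single j i (1 : ℂ) := by
  ext p q
  simp [conjTranspose_apply, single, and_comm]

private lemma trace_std_mul {n : ℕ} (i j : Fin n) (x : Matrix (Fin n) (Fin n) ℂ) :
    (single j i (1 : ℂ) * x).trace = x i j := by
  rw [Matrix.trace]
  simp only [Matrix.diag, Matrix.mul_apply, single, of_apply, ite_mul, one_mul,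
    zero_mul]
  rw [Finset.sum_comm]
  simp [ite_and, Finset.sum_ite_eq, Finset.sum_ite_eq']

/-- With `q = (1/n) Σ_{ij} α(E_{ij}) ⊗ β(E_{ji})` (realized via the first-leg embedding `ι`
of `B(H)` and a commuting representation `β` of `M_n(ℂ)ᵒᵖ`), one has
`q (R_ξ R_η* ⊗ 1) = (R_ξ R_η* ⊗ 1) q = q (θ_{ξ,η} ⊗ 1) q`. -/
theorem stmt8 (n : ℕ)
    {H : Type*} [NormedAddCommGroup H] [InnerProductSpace ℂ H] [CompleteSpace H]
    {Hε : Type*} [NormedAddCommGroup Hε] [InnerProductSpace ℂ Hε] [CompleteSpace Hε]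
    {A : Type*} [Ring A] [StarRing A] [Algebra ℂ A] [StarModule ℂ A]
    (α : Matrix (Fin n) (Fin n) ℂ →⋆ₐ[ℂ] (H →L[ℂ] H))
    (β : (Matrix (Fin n) (Fin n) ℂ)ᵐᵒᵖ →⋆ₐ[ℂ] A)
    (ι : (H →L[ℂ] H) →⋆ₐ[ℂ] A)
    (hcomm : ∀ T x, Commute (ι T) (β x))
    (Λ : Matrix (Fin n) (Fin n) ℂ →ₗ[ℂ] Hε)
    (hΛ : ∀ x y, (inner ℂ (Λ x) (Λ y) : ℂ) = (n : ℂ) * (xᴴ * y).trace)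
    (hspan : Submodule.span ℂ (Set.range Λ) = ⊤)
    (R : H → (Hε →L[ℂ] H))
    (hR : ∀ ξ x, R ξ (Λ x) = α x ξ)
    (q : A)
    (hq : q = (n : ℂ)⁻¹ • ∑ i : Fin n, ∑ j : Fin n,
        ι (α (single i j (1 : ℂ))) * β (op (single j i (1 : ℂ))))
    (ξ η : H) :
    q * ι ((R ξ).comp (ContinuousLinearMap.adjoint (R η)))
        = ι ((R ξ).comp (ContinuousLinearMap.adjoint (R η))) * q ∧
      q * ι ((R ξ).comp (ContinuousLinearMap.adjoint (R η)))
        = q * ι ((innerSL ℂ η).smulRight ξ) * q := by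
  rcases Nat.eq_zero_or_pos n with hn | hn
  · subst hn
    have : q = 0 := by simp [hq]
    simp [this]
  have hn' : (n : ℂ) ≠ 0 := Nat.cast_ne_zero.mpr hn.ne'
  set e : Fin n → Fin n → Matrix (Fin n) (Fin n) ℂ :=
    fun i j => single i j (1 : ℂ) with he
  set θ : H →L[ℂ] H := (innerSL ℂ η).smulRight ξ with hθ
  -- surjectivity of Λ
  have hsurj : Function.Surjective Λ := by
    rw [← LinearMap.range_eq_top]
    rw [← hspan, ← Submodule.span_eq (LinearMap.range Λ), LinearMap.coe_range]
  -- adjoint of α of a matrix unit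
  have hadj : ∀ i j, ContinuousLinearMap.adjoint (α (e j i)) = α (e i j) := by
    intro i j
    rw [← ContinuousLinearMap.star_eq_adjoint]
    have h1 : star (e j i) = e i j := by
      simpa [he, star_eq_conjTranspose] using stdBasisMatrix_conjT j i
    rw [← h1, map_star]
  -- Step A : the operator identity
  have hRR : (R ξ).comp (ContinuousLinearMap.adjoint (R η))
      = (n : ℂ)⁻¹ • ∑ i, ∑ j, α (e i j) * θ * α (e j i) := by
    ext ζ
    obtain ⟨x, hx⟩ := hsurj ((ContinuousLinearMap.adjoint (R η)) ζ)
    have hxval : ∀ i j, (n : ℂ) * x i j = inner ℂ (α (e i j) η) ζ := by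
      intro i j
      have h1 : (inner ℂ (Λ (e i j)) (Λ x) : ℂ) = (n : ℂ) * x i j := by
        rw [hΛ, he]
        rw [show (single i j (1 : ℂ))ᴴ = single j i 1 from
          stdBasisMatrix_conjT i j, trace_std_mul]
      have h2 : (inner ℂ (Λ (e i j)) (Λ x) : ℂ) = inner ℂ (α (e i j) η) ζ := by
        rw [hx, ContinuousLinearMap.adjoint_inner_right, hR]
      rw [← h1, h2]
    have hLHS : (R ξ).comp (ContinuousLinearMap.adjoint (R η)) ζ = α x ξ := by
      simp [← hx, hR]
    rw [hLHS]
    have hxsum : x = ∑ i, ∑ j, x i j • e i j := by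
      conv_lhs => rw [matrix_eq_sum_single x]
      refine Finset.sum_congr rfl fun i _ => Finset.sum_congr rfl fun j _ => ?_
      rw [he, smul_single, smul_eq_mul, mul_one]
    have hθval : ∀ i j, (α (e i j) * θ * α (e j i)) ζ
        = (inner ℂ (α (e i j) η) ζ : ℂ) • α (e i j) ξ := by
      intro i j
      have : (inner ℂ η (α (e j i) ζ) : ℂ) = inner ℂ (α (e i j) η) ζ := by
        rw [← hadj i j, ContinuousLinearMap.adjoint_inner_left]
      simp [ContinuousLinearMap.mul_apply, hθ, this]
    rw [ContinuousLinearMap.smul_apply, ContinuousLinearMap.sum_apply]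
    simp only [ContinuousLinearMap.sum_apply, hθval]
    rw [hxsum, _root_.map_sum]
    simp only [_root_.map_sum, _root_.map_smul, ContinuousLinearMap.smul_apply, ContinuousLinearMap.sum_apply]
    rw [Finset.smul_sum]
    refine Finset.sum_congr rfl fun i _ => ?_
    rw [Finset.smul_sum]
    refine Finset.sum_congr rfl fun j _ => ?_
    rw [← hxval i j, smul_smul]
    congr 1
    field_simp
  -- abbreviations in A
  set a : Fin n → Fin n → A := fun i j => ι (α (e i j)) with ha'
  set b : Fin n → Fin n → A := fun i j => β (op (e i j)) with hb'
  set t : A := ι θ with ht'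
  have hee : ∀ (i j k l : Fin n), e i j * e k l = if j = k then e i l else 0 := by
    intro i j k l
    rcases eq_or_ne j k with rfl | h
    · rw [if_pos rfl, he]
      simpa using single_mul_single_same (c := (1 : ℂ)) i j l (1 : ℂ)
    · rw [if_neg h, he]
      exact single_mul_single_of_ne (c := (1 : ℂ)) i j k h (1 : ℂ)
  have haa : ∀ i j k l, a i j * a k l = if j = k then a i l else 0 := by
    intro i j k l
    rw [ha', ← _root_.map_mul, ← _root_.map_mul, hee]
    split_ifs <;> simp
  have hbb : ∀ i j k l, b i j * b k l = if i = l then b k j else 0 := by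
    intro i j k l
    rw [hb', ← _root_.map_mul, ← op_mul, hee]
    rcases eq_or_ne i l with h | h
    · subst h; simp
    · rw [if_neg (Ne.symm h), if_neg h]
      simp
  have hab : ∀ i j k l, Commute (a i j) (b k l) := fun i j k l => hcomm _ _
  have htb : ∀ k l, Commute t (b k l) := fun k l => hcomm _ _
  obtain ⟨H1, H2⟩ := aux_alg a b t haa hbb hab htb
  have hqa : q = (n : ℂ)⁻¹ • ∑ i, ∑ j, a i j * b j i := by rw [hq]
  have hiRR : ι ((R ξ).comp (ContinuousLinearMap.adjoint (R η)))
      = (n : ℂ)⁻¹ • ∑ i, ∑ j, a i j * t * a j i := by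
    rw [hRR, _root_.map_smul, _root_.map_sum]
    congr 1
    refine Finset.sum_congr rfl fun i _ => ?_
    rw [_root_.map_sum]
    refine Finset.sum_congr rfl fun j _ => ?_
    rw [_root_.map_mul, _root_.map_mul]
  rw [hqa, hiRR]
  constructor
  · simp only [smul_mul_assoc, mul_smul_comm, smul_smul]
    rw [H1]
  · simp only [smul_mul_assoc, mul_smul_comm, smul_smul]
    rw [H2]
end

section
/- Let A and B be C*-algebras and f : A → M(B) a *-homomorphism into the multiplier algebra. Suppose there is an approximate unit (u_λ) of A such that f(u_λ) converges strictly to an element e ∈ M(B). Then: (i) e is a projection (e = e* = e²); (ii) e f(a) = f(a) = f(a) e for all a ∈ A; (iii) for every approximate unit (v_μ) of A, f(v_μ) converges strictly to the same element e. -/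
open Filter Topology

/-- Let `M` be a model of the multiplier algebra of the C*-algebra `B` (a unital C*-algebra
containing `B` as an essential ideal via `j`). If `f : A → M` is a *-homomorphism such that
`f(u_λ)` converges strictly to `e ∈ M` for some approximate unit `(u_λ)` of `A`, then `e` is
a projection, `e f(a) = f(a) = f(a) e` for all `a ∈ A`, and every approximate unit of `A` is
mapped by `f` to a net converging strictly to the same `e`. -/
theorem stmt11
    {A : Type*} [NonUnitalCStarAlgebra A]
    {B : Type*} [NonUnitalCStarAlgebra B]
    {M : Type*} [CStarAlgebra M]
    (j : B →⋆ₙₐ[ℂ] M) (hj : Function.Injective j)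
    (hideal : ∀ (m : M) (b : B), (∃ b', j b' = m * j b) ∧ (∃ b', j b' = j b * m))
    (hess : ∀ m : M, (∀ b : B, m * j b = 0 ∧ j b * m = 0) → m = 0)
    (f : A →⋆ₙₐ[ℂ] M)
    {ι : Type*} [Nonempty ι] [SemilatticeSup ι]
    (u : ι → A)
    (hu_pos : ∀ i, ∃ v, u i = star v * v) (hu_norm : ∀ i, ‖u i‖ ≤ 1)
    (hu_mono : ∀ i i', i ≤ i' → ∃ w, u i' - u i = star w * w)
    (hu_approx : ∀ a : A, Tendsto (fun i => u i * a) atTop (𝓝 a))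
    (e : M)
    (hstrict : ∀ b : B, Tendsto (fun i => f (u i) * j b) atTop (𝓝 (e * j b)) ∧
        Tendsto (fun i => j b * f (u i)) atTop (𝓝 (j b * e))) :
    (IsSelfAdjoint e ∧ e * e = e) ∧
      (∀ a : A, e * f a = f a ∧ f a * e = f a) ∧
      (∀ (κ : Type) (_ : Nonempty κ) (_ : SemilatticeSup κ) (v : κ → A),
        (∀ i, ∃ w, v i = star w * w) → (∀ i, ‖v i‖ ≤ 1) →
        (∀ i i', i ≤ i' → ∃ w, v i' - v i = star w * w) →
        (∀ a : A, Tendsto (fun i => v i * a) atTop (𝓝 a)) →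
        ∀ b : B, Tendsto (fun i => f (v i) * j b) atTop (𝓝 (e * j b)) ∧
          Tendsto (fun i => j b * f (v i)) atTop (𝓝 (j b * e))) := by
  classical
  -- f is contractive, hence continuous
  have hfc : ∀ a : A, ‖f a‖ ≤ ‖a‖ := fun a => NonUnitalStarAlgHom.norm_apply_le f a
  have hf_cont : Continuous f :=
    AddMonoidHomClass.continuous_of_bound f 1 fun a => by simpa using hfc a
  -- elements equal when they agree as multipliers
  have heq : ∀ x y : M, (∀ b : B, x * j b = y * j b) → (∀ b : B, j b * x = j b * y) →
      x = y := by
    intro x y h1 h2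
    have h0 : x - y = 0 := hess (x - y) fun b =>
      ⟨by rw [sub_mul, h1, sub_self], by rw [mul_sub, h2, sub_self]⟩
    exact sub_eq_zero.mp h0
  -- u i is selfadjoint
  have hu_sa : ∀ i, star (u i) = u i := by
    intro i
    obtain ⟨v, hv⟩ := hu_pos i
    simp [hv, star_mul]
  -- a * u i → a
  have hu_approx' : ∀ a : A, Tendsto (fun i => a * u i) atTop (𝓝 a) := by
    intro a
    have := (hu_approx (star a)).star
    simpa [star_mul, hu_sa] using this
  -- f (u i) * f a → f a and f a * f (u i) → f a
  have hL : ∀ a : A, Tendsto (fun i => f (u i) * f a) atTop (𝓝 (f a)) := by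
    intro a
    have := (hf_cont.tendsto a).comp (hu_approx a)
    simpa [Function.comp_def, map_mul] using this
  have hR : ∀ a : A, Tendsto (fun i => f a * f (u i)) atTop (𝓝 (f a)) := by
    intro a
    have := (hf_cont.tendsto a).comp (hu_approx' a)
    simpa [Function.comp_def, map_mul] using this
  -- part (ii)
  have hii : ∀ a : A, e * f a = f a ∧ f a * e = f a := by
    intro a
    constructor
    · refine heq _ _ (fun b => ?_) (fun b => ?_)
      · obtain ⟨b', hb'⟩ := (hideal (f a) b).1
        have h1 : Tendsto (fun i => f (u i) * (f a * j b)) atTop (𝓝 (e * (f a * j b))) := by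
          rw [← hb']; exact (hstrict b').1
        have h2 : Tendsto (fun i => f (u i) * (f a * j b)) atTop (𝓝 (f a * j b)) := by
          simpa only [mul_assoc] using (hL a).mul_const (j b)
        have := tendsto_nhds_unique h1 h2
        rw [mul_assoc]; exact this
      · have h1 : Tendsto (fun i => j b * f (u i) * f a) atTop (𝓝 (j b * e * f a)) :=
          (hstrict b).2.mul_const (f a)
        have h2 : Tendsto (fun i => j b * f (u i) * f a) atTop (𝓝 (j b * f a)) := by
          simpa only [mul_assoc] using (tendsto_const_nhds (x := j b)).mul (hL a)
        have := tendsto_nhds_unique h1 h2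
        rw [← mul_assoc]; exact this
    · refine heq _ _ (fun b => ?_) (fun b => ?_)
      · have h1 : Tendsto (fun i => f a * (f (u i) * j b)) atTop (𝓝 (f a * (e * j b))) :=
          (tendsto_const_nhds (x := f a)).mul (hstrict b).1
        have h2 : Tendsto (fun i => f a * (f (u i) * j b)) atTop (𝓝 (f a * j b)) := by
          simpa only [mul_assoc] using (hR a).mul_const (j b)
        have := tendsto_nhds_unique h1 h2
        rw [mul_assoc]; exact this
      · obtain ⟨b', hb'⟩ := (hideal (f a) b).2
        have h1 : Tendsto (fun i => j b * f a * f (u i)) atTop (𝓝 (j b * f a * e)) := by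
          rw [← hb']; exact (hstrict b').2
        have h2 : Tendsto (fun i => j b * f a * f (u i)) atTop (𝓝 (j b * f a)) := by
          simpa only [mul_assoc] using (tendsto_const_nhds (x := j b)).mul (hR a)
        have := tendsto_nhds_unique h1 h2
        rw [← mul_assoc]; exact this
  -- f (u i) is selfadjoint
  have hfu_sa : ∀ i, star (f (u i)) = f (u i) := by
    intro i; rw [← map_star, hu_sa]
  -- e is selfadjoint
  have he_sa : IsSelfAdjoint e := by
    refine heq _ _ (fun b => ?_) (fun b => ?_)
    · have h1 : Tendsto (fun i => f (u i) * j b) atTop (𝓝 (star e * j b)) := by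
        have := ((hstrict (star b)).2).star
        simpa [star_mul, map_star, hfu_sa] using this
      exact tendsto_nhds_unique h1 (hstrict b).1
    · have h1 : Tendsto (fun i => j b * f (u i)) atTop (𝓝 (j b * star e)) := by
        have := ((hstrict (star b)).1).star
        simpa [star_mul, map_star, hfu_sa] using this
      exact tendsto_nhds_unique h1 (hstrict b).2
  -- e is idempotent
  have he_idem : e * e = e := by
    refine heq _ _ (fun b => ?_) (fun b => ?_)
    · have h1 : Tendsto (fun i => e * (f (u i) * j b)) atTop (𝓝 (e * (e * j b))) :=
        (tendsto_const_nhds (x := e)).mul (hstrict b).1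
      have h2 : Tendsto (fun i => e * (f (u i) * j b)) atTop (𝓝 (e * j b)) := by
        have : (fun i => e * (f (u i) * j b)) = fun i => f (u i) * j b := by
          funext i; rw [← mul_assoc, (hii (u i)).1]
        rw [this]; exact (hstrict b).1
      have := tendsto_nhds_unique h1 h2
      rw [mul_assoc]; exact this
    · have h1 : Tendsto (fun i => j b * f (u i) * e) atTop (𝓝 (j b * e * e)) :=
        (hstrict b).2.mul_const e
      have h2 : Tendsto (fun i => j b * f (u i) * e) atTop (𝓝 (j b * e)) := by
        have : (fun i => j b * f (u i) * e) = fun i => j b * f (u i) := by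
          funext i; rw [mul_assoc, (hii (u i)).2]
        rw [this]; exact (hstrict b).2
      have := tendsto_nhds_unique h1 h2
      rw [← mul_assoc]; exact this
  refine ⟨⟨he_sa, he_idem⟩, hii, ?_⟩
  -- part (iii)
  intro κ _ _ v hv_pos hv_norm hv_mono hv_approx
  letI := CStarAlgebra.spectralOrder M
  haveI := CStarAlgebra.spectralOrderedRing M
  -- f (v k) is a selfadjoint contraction with 0 ≤ f (v k) ≤ 1
  have hfv_nonneg : ∀ k, (0 : M) ≤ f (v k) := by
    intro k
    obtain ⟨w, hw⟩ := hv_pos k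
    rw [hw, map_mul, map_star]
    exact star_mul_self_nonneg (f w)
  have hfv_le_one : ∀ k, f (v k) ≤ 1 := by
    intro k
    rw [← CStarAlgebra.norm_le_one_iff_of_nonneg _ (hfv_nonneg k)]
    exact (hfc (v k)).trans (hv_norm k)
  have h1mfv : ∀ k, ‖(1 : M) - f (v k)‖ ≤ 1 := by
    intro k
    have h0 : (0 : M) ≤ 1 - f (v k) := sub_nonneg.mpr (hfv_le_one k)
    rw [CStarAlgebra.norm_le_one_iff_of_nonneg _ h0]
    simpa using hfv_nonneg k
  have hv_sa : ∀ k, star (v k) = v k := by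
    intro k
    obtain ⟨w, hw⟩ := hv_pos k
    simp [hw, star_mul]
  have hfv_sa : ∀ k, star (f (v k)) = f (v k) := by
    intro k; rw [← map_star, hv_sa]
  -- key: (1 - f (v k)) * (e * j b) → 0
  have hkey : ∀ b : B, Tendsto (fun k => ((1 : M) - f (v k)) * (e * j b)) atTop (𝓝 0) := by
    intro b
    rw [NormedAddCommGroup.tendsto_nhds_zero]
    intro ε hε
    -- choose i₀ with ‖f (u i₀) * j b - e * j b‖ < ε / 3
    obtain ⟨i₀, hi₀⟩ := (Metric.tendsto_atTop.mp (hstrict b).1) (ε / 3) (by positivity)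
    have hub : ‖e * j b - f (u i₀) * j b‖ ≤ ε / 3 := by
      rw [norm_sub_rev]
      have := hi₀ i₀ le_rfl
      rw [dist_eq_norm] at this
      linarith
    -- choose k₀ so that ‖v k * u i₀ - u i₀‖ small
    set δ : ℝ := ε / 3 / (‖j b‖ + 1) with hδ
    have hjb1 : (0 : ℝ) < ‖j b‖ + 1 := by positivity
    have hδpos : 0 < δ := by positivity
    obtain ⟨k₀, hk₀⟩ := (Metric.tendsto_atTop.mp (hv_approx (u i₀))) δ hδpos
    rw [eventually_atTop]
    refine ⟨k₀, fun k hk => ?_⟩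
    have hvk : ‖u i₀ - v k * u i₀‖ ≤ δ := by
      rw [norm_sub_rev]
      have := hk₀ k hk
      rw [dist_eq_norm] at this
      linarith
    have key : ‖((1 : M) - f (v k)) * (e * j b)‖ ≤ ε / 3 + ε / 3 := by
      calc ‖((1 : M) - f (v k)) * (e * j b)‖
          = ‖((1 : M) - f (v k)) * (e * j b - f (u i₀) * j b) +
              ((1 : M) - f (v k)) * (f (u i₀) * j b)‖ := by
            rw [← mul_add, sub_add_cancel]
        _ ≤ ‖((1 : M) - f (v k)) * (e * j b - f (u i₀) * j b)‖ +
              ‖((1 : M) - f (v k)) * (f (u i₀) * j b)‖ := norm_add_le _ _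
        _ ≤ ‖(1 : M) - f (v k)‖ * ‖e * j b - f (u i₀) * j b‖ +
              ‖f (u i₀ - v k * u i₀)‖ * ‖j b‖ := by
            gcongr ?_ + ?_
            · exact norm_mul_le _ _
            · have hre : ((1 : M) - f (v k)) * (f (u i₀) * j b)
                  = f (u i₀ - v k * u i₀) * j b := by
                rw [map_sub, map_mul, sub_mul, one_mul, sub_mul, mul_assoc]
              rw [hre]
              exact norm_mul_le _ _
        _ ≤ 1 * (ε / 3) + δ * (‖j b‖ + 1) := by
            refine add_le_add (mul_le_mul (h1mfv k) hub (norm_nonneg _) zero_le_one) ?_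
            have ha : ‖f (u i₀ - v k * u i₀)‖ ≤ δ := (hfc _).trans hvk
            have hb : ‖j b‖ ≤ ‖j b‖ + 1 := by linarith
            exact mul_le_mul ha hb (norm_nonneg _) hδpos.le
        _ = ε / 3 + ε / 3 := by
            rw [one_mul, hδ, div_mul_cancel₀ _ (ne_of_gt hjb1)]
    linarith
  -- right strict convergence
  have hright : ∀ b : B, Tendsto (fun k => f (v k) * j b) atTop (𝓝 (e * j b)) := by
    intro b
    have hrw : (fun k => f (v k) * j b)
        = fun k => e * j b - ((1 : M) - f (v k)) * (e * j b) := by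
      funext k
      rw [sub_mul, one_mul, sub_sub_cancel, ← mul_assoc, (hii (v k)).2]
    rw [hrw]
    have := (tendsto_const_nhds (x := e * j b)).sub (hkey b)
    simpa using this
  intro b
  refine ⟨hright b, ?_⟩
  -- left: by taking adjoints
  have := (hright (star b)).star
  have hrw : (fun k => star (f (v k) * j (star b))) = fun k => j b * f (v k) := by
    funext k; rw [star_mul, hfv_sa, map_star, star_star]
  rw [hrw] at this
  have hrw2 : star (e * j (star b)) = j b * e := by
    rw [star_mul, map_star, star_star, he_sa.star_eq]
  rwa [hrw2] at this
end

section
/- Let H be a Hilbert space and V ∈ B(H ⊗ H) a unitary satisfying the pentagon equation V₁₂ V₁₃ V₂₃ = V₂₃ V₁₂ on H ⊗ H ⊗ H. Then the norm-closed linear span C(V) of the operators (id ⊗ ω_{ξ,η})(Σ V), for ξ, η ∈ H, is closed under multiplication (i.e. C(V) is a norm-closed subalgebra of B(H)). -/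
open scoped ComplexConjugate

noncomputable section

namespace Stmt16Aux

variable {E F : Type*}
  [NormedAddCommGroup E] [InnerProductSpace ℂ E] [CompleteSpace E]
  [NormedAddCommGroup F] [InnerProductSpace ℂ F] [CompleteSpace F]

lemma dense_inner_ext {s : Set E} (hd : Dense ((Submodule.span ℂ s : Submodule ℂ E) : Set E))
    {v w : E} (h : ∀ y ∈ s, (inner ℂ y v : ℂ) = inner ℂ y w) : v = w := by
  have h' : ∀ y ∈ Submodule.span ℂ s, (inner ℂ y (v - w) : ℂ) = 0 := by
    intro y hy
    induction hy using Submodule.span_induction with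
    | mem z hz => rw [inner_sub_right, h z hz, sub_self]
    | zero => simp
    | add a b _ _ ha hb => rw [inner_add_left, ha, hb, add_zero]
    | smul c a _ ha => rw [inner_smul_left, ha, mul_zero]
  have hz : v - w = 0 := by
    refine Dense.eq_zero_of_inner_left (𝕜 := ℂ) hd (fun y hy => ?_)
    rw [← inner_conj_symm, h' y hy, map_zero]
  exact sub_eq_zero.mp hz

lemma inner_self_ofReal {G : Type*} [NormedAddCommGroup G] [InnerProductSpace ℂ G] (x : G) :
    (inner ℂ x x : ℂ) = ((‖x‖ ^ 2 : ℝ) : ℂ) := by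
  rw [inner_self_eq_norm_sq_to_K]
  norm_cast

lemma exists_extension {ι : Type*} (q : ι → E) (r : ι → F) (c : ℝ) (hc : 0 ≤ c)
    (h : ∀ i j, (inner ℂ (r i) (r j) : ℂ) = (c : ℂ) * inner ℂ (q i) (q j))
    (hdense : Dense ((Submodule.span ℂ (Set.range q) : Submodule ℂ E) : Set E)) :
    ∃ T : E →L[ℂ] F, (∀ i, T (q i) = r i) ∧ ∀ x, ‖T x‖ = Real.sqrt c * ‖x‖ := by
  classical
  set Ψ : (ι →₀ ℂ) →ₗ[ℂ] E := Finsupp.linearCombination ℂ q with hΨ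
  set Φ : (ι →₀ ℂ) →ₗ[ℂ] F := Finsupp.linearCombination ℂ r with hΦ
  have key : ∀ f : ι →₀ ℂ, (inner ℂ (Φ f) (Φ f) : ℂ) = (c : ℂ) * inner ℂ (Ψ f) (Ψ f) := by
    intro f
    rw [hΨ, hΦ, Finsupp.linearCombination_apply, Finsupp.linearCombination_apply,
      Finsupp.sum, Finsupp.sum, sum_inner, sum_inner, Finset.mul_sum]
    refine Finset.sum_congr rfl fun i _ => ?_
    rw [inner_sum, inner_sum, Finset.mul_sum]
    refine Finset.sum_congr rfl fun j _ => ?_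
    rw [inner_smul_left, inner_smul_right, inner_smul_left, inner_smul_right, h]
    ring
  have hnorm : ∀ f, ‖Φ f‖ = Real.sqrt c * ‖Ψ f‖ := by
    intro f
    have hk := key f
    rw [inner_self_eq_norm_sq_to_K, inner_self_eq_norm_sq_to_K] at hk
    have h2 : ‖Φ f‖ ^ 2 = c * ‖Ψ f‖ ^ 2 := by
      have h2' : ((‖Φ f‖ ^ 2 : ℝ) : ℂ) = ((c * ‖Ψ f‖ ^ 2 : ℝ) : ℂ) := by push_cast; exact hk
      exact_mod_cast h2'
    have h3 := congrArg Real.sqrt h2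
    rwa [Real.sqrt_sq (norm_nonneg _), Real.sqrt_mul hc, Real.sqrt_sq (norm_nonneg _)] at h3
  have hker : LinearMap.ker Ψ ≤ LinearMap.ker Φ := by
    intro f hf
    rw [LinearMap.mem_ker] at hf ⊢
    have h4 := hnorm f
    rw [hf, norm_zero, mul_zero, norm_eq_zero] at h4
    exact h4
  let g₁ : ((ι →₀ ℂ) ⧸ LinearMap.ker Ψ) →ₗ[ℂ] F := Submodule.liftQ _ Φ hker
  let g₀ : LinearMap.range Ψ →ₗ[ℂ] F := g₁ ∘ₗ (LinearMap.quotKerEquivRange Ψ).symm.toLinearMap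
  have hg₀ : ∀ (f : ι →₀ ℂ) (hm : Ψ f ∈ LinearMap.range Ψ), g₀ ⟨Ψ f, hm⟩ = Φ f := by
    intro f hm
    show g₁ ((LinearMap.quotKerEquivRange Ψ).symm ⟨Ψ f, hm⟩) = Φ f
    rw [LinearMap.quotKerEquivRange_symm_apply_image]
    rfl
  have hg₀norm : ∀ y : LinearMap.range Ψ, ‖g₀ y‖ = Real.sqrt c * ‖y‖ := by
    rintro ⟨y, hy⟩
    obtain ⟨f, rfl⟩ := hy
    exact (congrArg norm (hg₀ f _)).trans (hnorm f)
  let gc : LinearMap.range Ψ →L[ℂ] F :=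
    LinearMap.mkContinuous g₀ (Real.sqrt c) (fun y => le_of_eq (hg₀norm y))
  let eL : LinearMap.range Ψ →L[ℂ] E := (LinearMap.range Ψ).subtypeL
  have hdr : DenseRange eL := by
    have hre : Set.range eL = ((Submodule.span ℂ (Set.range q) : Submodule ℂ E) : Set E) := by
      rw [hΨ] at *
      rw [← Finsupp.range_linearCombination]
      exact Subtype.range_coe
    rw [DenseRange, hre]
    exact hdense
  have hui : IsUniformInducing eL := isometry_subtype_coe.isUniformInducing
  refine ⟨gc.extend eL, ?_, ?_⟩
  · intro i
    have hqi : Ψ (Finsupp.single i 1) = q i := by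
      rw [hΨ, Finsupp.linearCombination_single, one_smul]
    have hmem : q i ∈ LinearMap.range Ψ := ⟨Finsupp.single i 1, hqi⟩
    have heq : gc.extend eL (eL ⟨q i, hmem⟩) = gc ⟨q i, hmem⟩ :=
      ContinuousLinearMap.extend_eq gc (e := eL) hdr hui _
    rw [show eL ⟨q i, hmem⟩ = q i from rfl] at heq
    rw [heq]
    show g₀ ⟨q i, hmem⟩ = r i
    have hsub : (⟨q i, hmem⟩ : LinearMap.range Ψ) = ⟨Ψ (Finsupp.single i 1), LinearMap.mem_range_self Ψ _⟩ :=
      Subtype.ext hqi.symm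
    rw [hsub, hg₀]
    rw [hΦ, Finsupp.linearCombination_single, one_smul]
  · intro x
    have hclosed : IsClosed {x : E | ‖gc.extend eL x‖ = Real.sqrt c * ‖x‖} :=
      isClosed_eq ((gc.extend eL).continuous.norm)
        (continuous_const.mul continuous_norm)
    have hx : x ∈ closure (Set.range eL) := by rw [hdr.closure_range]; trivial
    refine closure_minimal ?_ hclosed hx
    rintro _ ⟨y, rfl⟩
    show ‖gc.extend eL (eL y)‖ = Real.sqrt c * ‖eL y‖
    rw [ContinuousLinearMap.extend_eq gc (e := eL) hdr hui y]
    show ‖g₀ y‖ = Real.sqrt c * ‖(y : E)‖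
    rw [hg₀norm y]
    rfl

end Stmt16Aux

set_option maxHeartbeats 2000000 in
open Stmt16Aux in
/-- If `V` is a unitary on `H ⊗ H` (given abstractly) satisfying the pentagon equation
`V₁₂ V₁₃ V₂₃ = V₂₃ V₁₂`, then the closed span `C(V)` of the slices `(id ⊗ ω_{ξ,η})(Σ V)`
is closed under multiplication. -/
theorem stmt16
    {H E F : Type*}
    [NormedAddCommGroup H] [InnerProductSpace ℂ H] [CompleteSpace H]
    [NormedAddCommGroup E] [InnerProductSpace ℂ E] [CompleteSpace E]
    [NormedAddCommGroup F] [InnerProductSpace ℂ F] [CompleteSpace F]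
    (t : H →ₗ[ℂ] H →ₗ[ℂ] E)
    (ht : ∀ a a' b b', (inner ℂ (t a b) (t a' b') : ℂ) = inner ℂ a a' * inner ℂ b b')
    (hd : Dense (Submodule.span ℂ {z : E | ∃ a b, z = t a b} : Set E))
    (t3 : H →ₗ[ℂ] H →ₗ[ℂ] H →ₗ[ℂ] F)
    (ht3 : ∀ a b c a' b' c', (inner ℂ (t3 a b c) (t3 a' b' c') : ℂ)
      = inner ℂ a a' * inner ℂ b b' * inner ℂ c c')
    (hd3 : Dense (Submodule.span ℂ {z : F | ∃ a b c, z = t3 a b c} : Set F))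
    (V : E →L[ℂ] E) (hV : V ∈ unitary (E →L[ℂ] E))
    (V12 V13 V23 : F →L[ℂ] F)
    (hV12 : ∀ a b c a' b' c', (inner ℂ (t3 a' b' c') (V12 (t3 a b c)) : ℂ)
      = (inner ℂ (t a' b') (V (t a b)) : ℂ) * inner ℂ c' c)
    (hV13 : ∀ a b c a' b' c', (inner ℂ (t3 a' b' c') (V13 (t3 a b c)) : ℂ)
      = (inner ℂ (t a' c') (V (t a c)) : ℂ) * inner ℂ b' b)
    (hV23 : ∀ a b c a' b' c', (inner ℂ (t3 a' b' c') (V23 (t3 a b c)) : ℂ)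
      = (inner ℂ a' a : ℂ) * inner ℂ (t b' c') (V (t b c)))
    (hpent : V12.comp (V13.comp V23) = V23.comp V12) :
    ∀ x ∈ closure (Submodule.span ℂ {S : H →L[ℂ] H | ∃ ξ η : H,
        ∀ ζ ζ', (inner ℂ ζ' (S ζ) : ℂ) = inner ℂ (t ξ ζ') (V (t ζ η))} : Set (H →L[ℂ] H)),
      ∀ y ∈ closure (Submodule.span ℂ {S : H →L[ℂ] H | ∃ ξ η : H,
        ∀ ζ ζ', (inner ℂ ζ' (S ζ) : ℂ) = inner ℂ (t ξ ζ') (V (t ζ η))} : Set (H →L[ℂ] H)),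
      x * y ∈ closure (Submodule.span ℂ {S : H →L[ℂ] H | ∃ ξ η : H,
        ∀ ζ ζ', (inner ℂ ζ' (S ζ) : ℂ) = inner ℂ (t ξ ζ') (V (t ζ η))} : Set (H →L[ℂ] H)) := by
  classical
  set s : Set (H →L[ℂ] H) := {S : H →L[ℂ] H | ∃ ξ η : H,
      ∀ ζ ζ', (inner ℂ ζ' (S ζ) : ℂ) = inner ℂ (t ξ ζ') (V (t ζ η))} with hsdef
  set sE : Set E := {z : E | ∃ a b, z = t a b} with hsEdef
  set s3 : Set F := {z : F | ∃ a b c, z = t3 a b c} with hs3def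
  -- norm of elementary tensors
  have htnorm : ∀ a b, ‖t a b‖ = ‖a‖ * ‖b‖ := by
    intro a b
    have hk := ht a a b b
    rw [inner_self_ofReal, inner_self_ofReal, inner_self_ofReal] at hk
    have h2 : ‖t a b‖ ^ 2 = (‖a‖ * ‖b‖) ^ 2 := by
      have h2' : ((‖t a b‖ ^ 2 : ℝ) : ℂ) = (((‖a‖ * ‖b‖) ^ 2 : ℝ) : ℂ) := by
        push_cast at hk ⊢; rw [hk]; ring
      exact_mod_cast h2'
    have h3 := congrArg Real.sqrt h2
    rwa [Real.sqrt_sq (norm_nonneg _), Real.sqrt_sq (by positivity)] at h3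
  -- the elementary slice operators
  let tR : H → H →L[ℂ] E := fun a =>
    LinearMap.mkContinuous (t a) ‖a‖ (fun b => le_of_eq (htnorm a b))
  let tL : H → H →L[ℂ] E := fun b =>
    LinearMap.mkContinuous (t.flip b) ‖b‖ (fun a => by
      rw [LinearMap.flip_apply, htnorm, mul_comm])
  have htR : ∀ a b, tR a b = t a b := fun a b => rfl
  have htL : ∀ a b, tL b a = t a b := fun a b => rfl
  let L : H → H → (H →L[ℂ] H) := fun ξ η =>
    ((ContinuousLinearMap.adjoint (tR ξ)).comp V).comp (tL η)
  have hLval : ∀ ξ η ζ ζ', (inner ℂ ζ' (L ξ η ζ) : ℂ) = inner ℂ (t ξ ζ') (V (t ζ η)) := by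
    intro ξ η ζ ζ'
    show (inner ℂ ζ' ((ContinuousLinearMap.adjoint (tR ξ)) (V (tL η ζ))) : ℂ) = _
    rw [ContinuousLinearMap.adjoint_inner_right]
    rfl
  have hLmem : ∀ ξ η, L ξ η ∈ s := fun ξ η => ⟨ξ, η, hLval ξ η⟩
  -- range description
  have hrange2 : Set.range (fun p : H × H => t p.1 p.2) = sE := by
    ext z
    constructor
    · rintro ⟨⟨a, b⟩, rfl⟩; exact ⟨a, b, rfl⟩
    · rintro ⟨a, b, rfl⟩; exact ⟨(a, b), rfl⟩
  -- the maps J c (t a b ↦ t3 a b c) and K a (t b c ↦ t3 a b c)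
  have hJex : ∀ c : H, ∃ Jc : E →L[ℂ] F,
      (∀ a b, Jc (t a b) = t3 a b c) ∧ ∀ x, ‖Jc x‖ = ‖c‖ * ‖x‖ := by
    intro c
    obtain ⟨T, h1, h2⟩ := exists_extension (fun p : H × H => t p.1 p.2)
      (fun p : H × H => t3 p.1 p.2 c) (‖c‖ ^ 2) (by positivity)
      (fun i j => by
        rw [ht3, ht, inner_self_ofReal]
        push_cast
        ring)
      (by rw [hrange2]; exact hd)
    refine ⟨T, fun a b => h1 (a, b), fun x => ?_⟩
    rw [h2 x, Real.sqrt_sq (norm_nonneg c)]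
  have hKex : ∀ a : H, ∃ Ka : E →L[ℂ] F,
      (∀ b c, Ka (t b c) = t3 a b c) ∧ ∀ x, ‖Ka x‖ = ‖a‖ * ‖x‖ := by
    intro a
    obtain ⟨T, h1, h2⟩ := exists_extension (fun p : H × H => t p.1 p.2)
      (fun p : H × H => t3 a p.1 p.2) (‖a‖ ^ 2) (by positivity)
      (fun i j => by
        rw [ht3, ht, inner_self_ofReal]
        push_cast
        ring)
      (by rw [hrange2]; exact hd)
    refine ⟨T, fun b c => h1 (b, c), fun x => ?_⟩
    rw [h2 x, Real.sqrt_sq (norm_nonneg a)]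
  choose JJ hJeq hJnorm using hJex
  choose KK hKeq hKnorm using hKex
  -- pairing identities
  have hJpair : ∀ (c p q r : H) (x : E),
      (inner ℂ (t3 p q r) (JJ c x) : ℂ) = (inner ℂ r c : ℂ) * inner ℂ (t p q) x := by
    intro c p q r
    have hfg : (ContinuousLinearMap.comp (innerSL ℂ (t3 p q r)) (JJ c))
        = (inner ℂ r c : ℂ) • innerSL ℂ (t p q) := by
      refine ContinuousLinearMap.ext_on hd ?_
      rintro z ⟨a, b, rfl⟩
      simp only [ContinuousLinearMap.comp_apply, innerSL_apply_apply,
        ContinuousLinearMap.smul_apply, smul_eq_mul]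
      rw [hJeq c a b, ht3, ht]
      ring
    intro x
    have := congrArg (fun f : E →L[ℂ] ℂ => f x) hfg
    simpa using this
  have hKpair : ∀ (a p q r : H) (x : E),
      (inner ℂ (t3 p q r) (KK a x) : ℂ) = (inner ℂ p a : ℂ) * inner ℂ (t q r) x := by
    intro a p q r
    have hfg : (ContinuousLinearMap.comp (innerSL ℂ (t3 p q r)) (KK a))
        = (inner ℂ p a : ℂ) • innerSL ℂ (t q r) := by
      refine ContinuousLinearMap.ext_on hd ?_
      rintro z ⟨b, c, rfl⟩
      simp only [ContinuousLinearMap.comp_apply, innerSL_apply_apply,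
        ContinuousLinearMap.smul_apply, smul_eq_mul]
      rw [hKeq a b c, ht3, ht]
      ring
    intro x
    have := congrArg (fun f : E →L[ℂ] ℂ => f x) hfg
    simpa using this
  -- vector identities in F
  have hV12J : ∀ ζ η' η : H, V12 (t3 ζ η' η) = JJ η (V (t ζ η')) := by
    intro ζ η' η
    refine dense_inner_ext hd3 ?_
    rintro y ⟨a, b, c, rfl⟩
    rw [hV12 ζ η' η a b c, hJpair η a b c]
    ring
  have hV23K : ∀ ζ η' η : H, V23 (t3 ζ η' η) = KK ζ (V (t η' η)) := by
    intro ζ η' η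
    refine dense_inner_ext hd3 ?_
    rintro y ⟨a, b, c, rfl⟩
    rw [hV23 ζ η' η a b c, hKpair ζ a b c]
  have hV23adjK : ∀ p q r : H,
      ContinuousLinearMap.adjoint V23 (t3 p q r)
        = KK p (ContinuousLinearMap.adjoint V (t q r)) := by
    intro p q r
    refine dense_inner_ext hd3 ?_
    rintro y ⟨a, b, c, rfl⟩
    calc (inner ℂ (t3 a b c) (ContinuousLinearMap.adjoint V23 (t3 p q r)) : ℂ)
        = inner ℂ (V23 (t3 a b c)) (t3 p q r) :=
          ContinuousLinearMap.adjoint_inner_right V23 _ _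
      _ = (starRingEnd ℂ) (inner ℂ (t3 p q r) (V23 (t3 a b c)) : ℂ) :=
          (inner_conj_symm _ _).symm
      _ = (starRingEnd ℂ) ((inner ℂ p a : ℂ) * inner ℂ (t q r) (V (t b c))) := by
          rw [hV23 a b c p q r]
      _ = (inner ℂ a p : ℂ) * inner ℂ (V (t b c)) (t q r) := by
          rw [map_mul, inner_conj_symm, inner_conj_symm]
      _ = (inner ℂ a p : ℂ) * inner ℂ (t b c) (ContinuousLinearMap.adjoint V (t q r)) := by
          rw [ContinuousLinearMap.adjoint_inner_right]
      _ = inner ℂ (t3 a b c) (KK p (ContinuousLinearMap.adjoint V (t q r))) :=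
          (hKpair p a b c _).symm
  have hV12adjJ : ∀ p q r : H,
      ContinuousLinearMap.adjoint V12 (t3 p q r)
        = JJ r (ContinuousLinearMap.adjoint V (t p q)) := by
    intro p q r
    refine dense_inner_ext hd3 ?_
    rintro y ⟨a, b, c, rfl⟩
    calc (inner ℂ (t3 a b c) (ContinuousLinearMap.adjoint V12 (t3 p q r)) : ℂ)
        = inner ℂ (V12 (t3 a b c)) (t3 p q r) :=
          ContinuousLinearMap.adjoint_inner_right V12 _ _
      _ = (starRingEnd ℂ) (inner ℂ (t3 p q r) (V12 (t3 a b c)) : ℂ) :=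
          (inner_conj_symm _ _).symm
      _ = (starRingEnd ℂ) ((inner ℂ (t p q) (V (t a b)) : ℂ) * inner ℂ r c) := by
          rw [hV12 a b c p q r]
      _ = inner ℂ (V (t a b)) (t p q) * (inner ℂ c r : ℂ) := by
          rw [map_mul, inner_conj_symm, inner_conj_symm]
      _ = (inner ℂ c r : ℂ) * inner ℂ (t a b) (ContinuousLinearMap.adjoint V (t p q)) := by
          rw [ContinuousLinearMap.adjoint_inner_right]; ring
      _ = inner ℂ (t3 a b c) (JJ r (ContinuousLinearMap.adjoint V (t p q))) :=
          (hJpair r a b c _).symm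
  -- adjoint computations for tL and JJ
  have hιadj : ∀ η p q : H,
      ContinuousLinearMap.adjoint (tL η) (t p q) = (inner ℂ η q : ℂ) • p := by
    intro η p q
    refine ext_inner_left ℂ (fun h => ?_)
    rw [ContinuousLinearMap.adjoint_inner_right, inner_smul_right]
    rw [show ((tL η) h : E) = t h η from rfl, ht]
    ring
  have hJadj : ∀ η ξ' p q : H,
      ContinuousLinearMap.adjoint (JJ η) (t3 ξ' p q) = (inner ℂ η q : ℂ) • t ξ' p := by
    intro η ξ' p q
    refine dense_inner_ext hd ?_
    rintro z ⟨a, b, rfl⟩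
    rw [ContinuousLinearMap.adjoint_inner_right, hJeq η a b, ht3, inner_smul_right, ht]
    ring
  have hACop : ∀ ξ' η : H, (tR ξ').comp (ContinuousLinearMap.adjoint (tL η))
      = (ContinuousLinearMap.adjoint (JJ η)).comp (KK ξ') := by
    intro ξ' η
    refine ContinuousLinearMap.ext_on hd ?_
    rintro z ⟨p, q, rfl⟩
    simp only [ContinuousLinearMap.comp_apply]
    rw [hιadj η p q, hKeq ξ' p q, hJadj η ξ' p q, map_smul]
    rfl
  have hAC : ∀ (ξ' η : H) (u w : E),
      (inner ℂ (t ξ' (ContinuousLinearMap.adjoint (tL η) u)) w : ℂ)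
        = inner ℂ (KK ξ' u) (JJ η w) := by
    intro ξ' η u w
    have h1 : (t ξ' (ContinuousLinearMap.adjoint (tL η) u) : E)
        = ((tR ξ').comp (ContinuousLinearMap.adjoint (tL η))) u := rfl
    rw [h1, hACop ξ' η, ContinuousLinearMap.comp_apply,
      ContinuousLinearMap.adjoint_inner_left]
  -- the key step : products of generators lie in the closure
  have key : ∀ S₁ ∈ s, ∀ S₂ ∈ s,
      S₁ * S₂ ∈ closure ((Submodule.span ℂ s : Submodule ℂ (H →L[ℂ] H)) : Set (H →L[ℂ] H)) := by
    rintro S₁ ⟨ξ, η, h₁⟩ S₂ ⟨ξ', η', h₂⟩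
    set u₀ : E := ContinuousLinearMap.adjoint V (t ξ' ξ) with hu₀
    set w₀ : E := V (t η' η) with hw₀
    have mat : ∀ ζ ζ' : H, (inner ℂ ζ' ((S₁ * S₂) ζ) : ℂ)
        = inner ℂ (JJ ζ' u₀) (V13 (KK ζ w₀)) := by
      intro ζ ζ'
      calc (inner ℂ ζ' ((S₁ * S₂) ζ) : ℂ)
          = inner ℂ (t ξ ζ') (V (t (S₂ ζ) η)) := by
            rw [ContinuousLinearMap.mul_apply]; exact h₁ (S₂ ζ) ζ'
        _ = inner ℂ (ContinuousLinearMap.adjoint V (t ξ ζ')) (t (S₂ ζ) η) :=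
            (ContinuousLinearMap.adjoint_inner_left V _ _).symm
        _ = inner ℂ (ContinuousLinearMap.adjoint (tL η)
              (ContinuousLinearMap.adjoint V (t ξ ζ'))) (S₂ ζ) :=
            (ContinuousLinearMap.adjoint_inner_left (tL η) (S₂ ζ) _).symm
        _ = inner ℂ (t ξ' (ContinuousLinearMap.adjoint (tL η)
              (ContinuousLinearMap.adjoint V (t ξ ζ')))) (V (t ζ η')) := h₂ ζ _
        _ = inner ℂ (KK ξ' (ContinuousLinearMap.adjoint V (t ξ ζ'))) (JJ η (V (t ζ η'))) :=
            hAC ξ' η _ _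
        _ = inner ℂ (ContinuousLinearMap.adjoint V23 (t3 ξ' ξ ζ')) (V12 (t3 ζ η' η)) := by
            rw [hV23adjK ξ' ξ ζ', hV12J ζ η' η]
        _ = inner ℂ (t3 ξ' ξ ζ') (V23 (V12 (t3 ζ η' η))) :=
            ContinuousLinearMap.adjoint_inner_left V23 _ _
        _ = inner ℂ (t3 ξ' ξ ζ') (V12 (V13 (V23 (t3 ζ η' η)))) := by
            have hp := congrArg (fun A : F →L[ℂ] F => A (t3 ζ η' η)) hpent
            simp only [ContinuousLinearMap.comp_apply] at hp
            rw [← hp]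
        _ = inner ℂ (ContinuousLinearMap.adjoint V12 (t3 ξ' ξ ζ')) (V13 (V23 (t3 ζ η' η))) :=
            (ContinuousLinearMap.adjoint_inner_left V12 _ _).symm
        _ = inner ℂ (JJ ζ' u₀) (V13 (KK ζ w₀)) := by
            rw [hV12adjJ ξ' ξ ζ', hV23K ζ η' η]
    -- approximation of the slices of V12 V13 V23 by elements of the span
    have approx : ∀ u ∈ Submodule.span ℂ sE, ∀ w ∈ Submodule.span ℂ sE,
        ∃ T ∈ Submodule.span ℂ s, ∀ ζ ζ' : H,
          (inner ℂ ζ' (T ζ) : ℂ) = inner ℂ (JJ ζ' u) (V13 (KK ζ w)) := by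
      intro u hu
      induction hu using Submodule.span_induction with
      | mem u hu =>
        obtain ⟨a, b, rfl⟩ := hu
        intro w hw
        induction hw using Submodule.span_induction with
        | mem w hw =>
          obtain ⟨p, q, rfl⟩ := hw
          refine ⟨(inner ℂ b p : ℂ) • L a q,
            Submodule.smul_mem _ _ (Submodule.subset_span (hLmem a q)), fun ζ ζ' => ?_⟩
          rw [ContinuousLinearMap.smul_apply, inner_smul_right, hLval a q ζ ζ',
            hJeq ζ' a b, hKeq ζ p q, hV13 ζ p q a b ζ']
          ring
        | zero => exact ⟨0, Submodule.zero_mem _, fun ζ ζ' => by simp⟩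
        | add w₁ w₂ _ _ ih1 ih2 =>
          obtain ⟨T₁, hT₁, hv1⟩ := ih1
          obtain ⟨T₂, hT₂, hv2⟩ := ih2
          refine ⟨T₁ + T₂, Submodule.add_mem _ hT₁ hT₂, fun ζ ζ' => ?_⟩
          rw [ContinuousLinearMap.add_apply, inner_add_right, hv1, hv2, map_add, map_add,
            inner_add_right]
        | smul c w _ ih =>
          obtain ⟨T, hT, hv⟩ := ih
          refine ⟨c • T, Submodule.smul_mem _ _ hT, fun ζ ζ' => ?_⟩
          rw [ContinuousLinearMap.smul_apply, inner_smul_right, hv, map_smul, map_smul,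
            inner_smul_right]
      | zero => exact fun w hw => ⟨0, Submodule.zero_mem _, fun ζ ζ' => by simp⟩
      | add u₁ u₂ _ _ ih1 ih2 =>
        intro w hw
        obtain ⟨T₁, hT₁, hv1⟩ := ih1 w hw
        obtain ⟨T₂, hT₂, hv2⟩ := ih2 w hw
        refine ⟨T₁ + T₂, Submodule.add_mem _ hT₁ hT₂, fun ζ ζ' => ?_⟩
        rw [ContinuousLinearMap.add_apply, inner_add_right, hv1, hv2, map_add,
          inner_add_left]
      | smul c u _ ih =>
        intro w hw
        obtain ⟨T, hT, hv⟩ := ih w hw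
        refine ⟨(starRingEnd ℂ) c • T, Submodule.smul_mem _ _ hT, fun ζ ζ' => ?_⟩
        rw [ContinuousLinearMap.smul_apply, inner_smul_right, hv, map_smul,
          inner_smul_left]
    -- conclude by approximation
    rw [Metric.mem_closure_iff]
    intro ε hε
    set B := ‖V13‖ with hB
    set W := ‖w₀‖ + ‖u₀‖ + 1 with hW
    have hW1 : (1 : ℝ) ≤ W := by
      have := norm_nonneg w₀; have := norm_nonneg u₀; rw [hW]; linarith
    have hWpos : (0 : ℝ) < W := lt_of_lt_of_le one_pos hW1
    have hBnn : (0 : ℝ) ≤ B := norm_nonneg _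
    set δ := min 1 (ε / (2 * (B + 1) * W)) with hδdef
    have hδpos : 0 < δ := lt_min one_pos (by positivity)
    have hδ1 : δ ≤ 1 := min_le_left _ _
    have hδ2 : δ ≤ ε / (2 * (B + 1) * W) := min_le_right _ _
    obtain ⟨u, hu_mem, hu_close⟩ := Metric.mem_closure_iff.mp (hd u₀) δ hδpos
    obtain ⟨w, hw_mem, hw_close⟩ := Metric.mem_closure_iff.mp (hd w₀) δ hδpos
    obtain ⟨T, hT_mem, hT⟩ := approx u hu_mem w hw_mem
    refine ⟨T, hT_mem, ?_⟩
    rw [dist_eq_norm]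
    have huu : ‖u₀ - u‖ ≤ δ := by rw [← dist_eq_norm]; exact le_of_lt hu_close
    have hww : ‖w₀ - w‖ ≤ δ := by rw [← dist_eq_norm]; exact le_of_lt hw_close
    have hun : ‖u‖ ≤ ‖u₀‖ + 1 := by
      have h5 : ‖u‖ = ‖u₀ - (u₀ - u)‖ := by congr 1; abel
      have h6 : ‖u₀ - (u₀ - u)‖ ≤ ‖u₀‖ + ‖u₀ - u‖ := norm_sub_le _ _
      linarith
    set C := B * δ * ‖w₀‖ + (‖u₀‖ + 1) * (B * δ) with hC
    have hCnn : 0 ≤ C := by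
      rw [hC]
      have := norm_nonneg w₀; have := norm_nonneg u₀
      have := hδpos.le
      positivity
    have hbnd : ∀ ζ ζ' : H, ‖(inner ℂ ζ' ((S₁ * S₂ - T) ζ) : ℂ)‖ ≤ C * (‖ζ‖ * ‖ζ'‖) := by
      intro ζ ζ'
      have hsplit : (inner ℂ ζ' ((S₁ * S₂ - T) ζ) : ℂ)
          = inner ℂ (JJ ζ' (u₀ - u)) (V13 (KK ζ w₀))
            + inner ℂ (JJ ζ' u) (V13 (KK ζ (w₀ - w))) := by
        rw [ContinuousLinearMap.sub_apply, inner_sub_right, mat ζ ζ', hT ζ ζ',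
          map_sub, map_sub, map_sub, inner_sub_left, inner_sub_right]
        ring
      rw [hsplit]
      have t1 : ‖(inner ℂ (JJ ζ' (u₀ - u)) (V13 (KK ζ w₀)) : ℂ)‖
          ≤ (‖ζ'‖ * δ) * (B * (‖ζ‖ * ‖w₀‖)) := by
        refine le_trans (norm_inner_le_norm _ _) ?_
        have h1 : ‖JJ ζ' (u₀ - u)‖ ≤ ‖ζ'‖ * δ := by
          rw [hJnorm]; exact mul_le_mul_of_nonneg_left huu (norm_nonneg ζ')
        have h2 : ‖V13 (KK ζ w₀)‖ ≤ B * (‖ζ‖ * ‖w₀‖) := by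
          refine le_trans (ContinuousLinearMap.le_opNorm V13 _) ?_
          rw [hKnorm]
        exact mul_le_mul h1 h2 (norm_nonneg _)
          (mul_nonneg (norm_nonneg _) hδpos.le)
      have t2 : ‖(inner ℂ (JJ ζ' u) (V13 (KK ζ (w₀ - w))) : ℂ)‖
          ≤ (‖ζ'‖ * (‖u₀‖ + 1)) * (B * (‖ζ‖ * δ)) := by
        refine le_trans (norm_inner_le_norm _ _) ?_
        have h1 : ‖JJ ζ' u‖ ≤ ‖ζ'‖ * (‖u₀‖ + 1) := by
          rw [hJnorm]; exact mul_le_mul_of_nonneg_left hun (norm_nonneg ζ')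
        have h2 : ‖V13 (KK ζ (w₀ - w))‖ ≤ B * (‖ζ‖ * δ) := by
          refine le_trans (ContinuousLinearMap.le_opNorm V13 _) ?_
          rw [hKnorm]
          have : ‖ζ‖ * ‖w₀ - w‖ ≤ ‖ζ‖ * δ :=
            mul_le_mul_of_nonneg_left hww (norm_nonneg ζ)
          exact mul_le_mul_of_nonneg_left this hBnn
        refine mul_le_mul h1 h2 (norm_nonneg _) ?_
        have h0 : (0:ℝ) ≤ ‖u₀‖ + 1 := by positivity
        exact mul_nonneg (norm_nonneg _) h0
      calc ‖(inner ℂ (JJ ζ' (u₀ - u)) (V13 (KK ζ w₀)) : ℂ)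
            + inner ℂ (JJ ζ' u) (V13 (KK ζ (w₀ - w)))‖
          ≤ ‖(inner ℂ (JJ ζ' (u₀ - u)) (V13 (KK ζ w₀)) : ℂ)‖
            + ‖(inner ℂ (JJ ζ' u) (V13 (KK ζ (w₀ - w))) : ℂ)‖ := norm_add_le _ _
        _ ≤ (‖ζ'‖ * δ) * (B * (‖ζ‖ * ‖w₀‖)) + (‖ζ'‖ * (‖u₀‖ + 1)) * (B * (‖ζ‖ * δ)) :=
            add_le_add t1 t2
        _ = C * (‖ζ‖ * ‖ζ'‖) := by rw [hC]; ring
    have hopn : ‖S₁ * S₂ - T‖ ≤ C := by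
      refine ContinuousLinearMap.opNorm_le_bound _ hCnn (fun ζ => ?_)
      by_cases hz : ‖(S₁ * S₂ - T) ζ‖ = 0
      · rw [hz]; positivity
      · have hpos : 0 < ‖(S₁ * S₂ - T) ζ‖ :=
          lt_of_le_of_ne (norm_nonneg _) (Ne.symm hz)
        have h1 := hbnd ζ ((S₁ * S₂ - T) ζ)
        rw [inner_self_ofReal] at h1
        have h2 : ‖(S₁ * S₂ - T) ζ‖ ^ 2 ≤ C * (‖ζ‖ * ‖(S₁ * S₂ - T) ζ‖) := by
          have h3 : ‖(((‖(S₁ * S₂ - T) ζ‖ ^ 2 : ℝ)) : ℂ)‖ = ‖(S₁ * S₂ - T) ζ‖ ^ 2 := by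
            rw [Complex.norm_real]
            exact abs_of_nonneg (sq_nonneg _)
          rw [h3] at h1
          exact h1
        nlinarith [h2, hpos]
    have hfinal : C < ε := by
      have hCW : C = B * δ * W := by rw [hC, hW]; ring
      have hstep : B * δ * W ≤ B * (ε / (2 * (B + 1) * W)) * W := by
        have := mul_le_mul_of_nonneg_left hδ2 hBnn
        exact mul_le_mul_of_nonneg_right this hWpos.le
      have hlt : B * (ε / (2 * (B + 1) * W)) * W < ε := by
        have h2 : (0:ℝ) < 2 * (B + 1) * W := by positivity
        rw [show B * (ε / (2 * (B + 1) * W)) * W = ε * (B * W) / (2 * (B + 1) * W) by ring,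
          div_lt_iff₀ h2]
        nlinarith [mul_pos hε hWpos]
      rw [hCW]; exact lt_of_le_of_lt hstep hlt
    exact lt_of_le_of_lt hopn hfinal
  -- bootstrap : the closure of the span is closed under multiplication
  have hMc : ((Submodule.span ℂ s).topologicalClosure : Set (H →L[ℂ] H))
      = closure ((Submodule.span ℂ s : Submodule ℂ (H →L[ℂ] H)) : Set (H →L[ℂ] H)) :=
    Submodule.topologicalClosure_coe _
  have step : ∀ f : (H →L[ℂ] H) →L[ℂ] (H →L[ℂ] H),
      (∀ a ∈ s, f a ∈ closure ((Submodule.span ℂ s : Submodule ℂ (H →L[ℂ] H)) : Set (H →L[ℂ] H))) →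
      ∀ z ∈ closure ((Submodule.span ℂ s : Submodule ℂ (H →L[ℂ] H)) : Set (H →L[ℂ] H)),
        f z ∈ closure ((Submodule.span ℂ s : Submodule ℂ (H →L[ℂ] H)) : Set (H →L[ℂ] H)) := by
    intro f hf z hz
    set M := (Submodule.span ℂ s).topologicalClosure with hM
    have h1 : Submodule.span ℂ s
        ≤ M.comap (f : (H →L[ℂ] H) →ₗ[ℂ] (H →L[ℂ] H)) := by
      rw [Submodule.span_le]
      intro a ha
      have hfa : f a ∈ closure ((Submodule.span ℂ s : Submodule ℂ (H →L[ℂ] H)) : Set _) :=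
        hf a ha
      rw [← hMc] at hfa
      exact hfa
    have h2 : IsClosed ((M.comap (f : (H →L[ℂ] H) →ₗ[ℂ] (H →L[ℂ] H))
        : Submodule ℂ (H →L[ℂ] H)) : Set (H →L[ℂ] H)) := by
      have hpre : ((M.comap (f : (H →L[ℂ] H) →ₗ[ℂ] (H →L[ℂ] H))
          : Submodule ℂ (H →L[ℂ] H)) : Set (H →L[ℂ] H)) = ⇑f ⁻¹' (M : Set (H →L[ℂ] H)) := rfl
      rw [hpre]
      exact (Submodule.isClosed_topologicalClosure _).preimage f.continuous
    have h3 : closure ((Submodule.span ℂ s : Submodule ℂ (H →L[ℂ] H)) : Set (H →L[ℂ] H))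
        ⊆ ((M.comap (f : (H →L[ℂ] H) →ₗ[ℂ] (H →L[ℂ] H)) : Submodule ℂ (H →L[ℂ] H))
          : Set (H →L[ℂ] H)) :=
      closure_minimal (fun x hx => h1 hx) h2
    have h4 := h3 hz
    rw [← hMc]
    exact h4
  intro x hx y hy
  have stepA : ∀ a ∈ s,
      a * y ∈ closure ((Submodule.span ℂ s : Submodule ℂ (H →L[ℂ] H)) : Set (H →L[ℂ] H)) := by
    intro a ha
    have := step (ContinuousLinearMap.mul ℂ (H →L[ℂ] H) a)
      (fun b hb => by simpa using key a ha b hb) y hy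
    simpa using this
  have := step ((ContinuousLinearMap.mul ℂ (H →L[ℂ] H)).flip y)
    (fun a ha => by simpa using stepA a ha) x hx
  simpa using this
end
end
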